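/- arXiv:1311.2367 — 8 statements merged into one kernel-verified Lean document; each statement's English description precedes it below -/
import Mathlib

section
/- Let f : E → ℝ ∪ {+∞} be proper with x̄ ∈ dom f, where E is a finite-dimensional Euclidean space. Suppose that for every nonzero direction u ∈ E either d₋¹f(x̄; u) > 0, or there exists a positive integer n = n(u) ≥ 2 such that 0 ∈ ∂₋ⁱf(x̄; 0,…,0) for all i = 1,…,n−1 and d₋ⁿf(x̄; 0,…,0; u) > 0. Then x̄ is a strict local minimizer of f. -/
open Filter Topology

/-- The space of continuous `m`-linear forms `L^m(E)`. -/
abbrev MForm (E : Type*) [NormedAddCommGroup E] [InnerProductSpace ℝ E] (m : ℕ) : Type _ :=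
  ContinuousMultilinearMap ℝ (fun _ : Fin m => E) ℝ

/-- A tuple of multilinear forms `(x₁*, …, x_k*)`, where `x_i*` is an `i`-linear form. -/
abbrev FormTuple (E : Type*) [NormedAddCommGroup E] [InnerProductSpace ℝ E] (k : ℕ) : Type _ :=
  ∀ i : Fin k, MForm E (i.1 + 1)

/-- Restriction of a tuple of forms to its first `m` entries. -/
def FormTuple.restrict {E : Type*} [NormedAddCommGroup E] [InnerProductSpace ℝ E] {k : ℕ}
    (xs : FormTuple E k) (m : ℕ) (h : m ≤ k) : FormTuple E m :=
  fun j => xs ⟨j.1, lt_of_lt_of_le j.2 h⟩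

/-- The lower Hadamard directional derivative of order `k + 1` of `f` at `x`
with parameters `xs = (x₁*, …, x_k*)` in direction `u`:
`liminf_{t↓0, u'→u} (k+1)!/t^(k+1) * (f (x + t u') - f x - ∑_{i=1}^{k} t^i/i! · x_i*(u',…,u'))`. -/
noncomputable def hadamardDeriv {E : Type*} [NormedAddCommGroup E] [InnerProductSpace ℝ E]
    (f : E → EReal) (x : E) (k : ℕ) (xs : FormTuple E k) (u : E) : EReal :=
  Filter.liminf
    (fun p : ℝ × E =>
      (((Nat.factorial (k + 1) : ℝ) / p.1 ^ (k + 1) : ℝ) : EReal) *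
        (f (x + p.1 • p.2) - f x -
          ((∑ i : Fin k, p.1 ^ (i.1 + 1) / (Nat.factorial (i.1 + 1)) * xs i (fun _ => p.2) : ℝ) :
            EReal)))
    ((𝓝[>] (0 : ℝ)) ×ˢ 𝓝 u)

/-- The lower Hadamard subdifferential of order `k + 1` of `f` at `x`
with parameters `xs = (x₁*, …, x_k*)`. -/
def hadamardSubdiff {E : Type*} [NormedAddCommGroup E] [InnerProductSpace ℝ E]
    (f : E → EReal) (x : E) (k : ℕ) (xs : FormTuple E k) : Set (MForm E (k + 1)) :=
  {y | ∀ u : E, ((y (fun _ => u) : ℝ) : EReal) ≤ hadamardDeriv f x k xs u}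

/-- if for every nonzero direction `u` either the first-order lower Hadamard
derivative is positive, or there is an order `n = k + 1 ≥ 2` such that `0` lies in all the
lower Hadamard subdifferentials of order `i = 1, …, n - 1` with zero parameters and the
`n`-th order derivative at `u` is positive, then `xbar` is a strict local minimizer. -/
theorem stmt_4 {E : Type*} [NormedAddCommGroup E] [InnerProductSpace ℝ E]
    [FiniteDimensional ℝ E] (f : E → EReal)
    (hbot : ∀ y, f y ≠ ⊥) (xbar : E) (hdom : f xbar ≠ ⊤)
    (h : ∀ u : E, u ≠ 0 →
      0 < hadamardDeriv f xbar 0 (fun _ => 0) u ∨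
        ∃ k : ℕ, 1 ≤ k ∧
          (∀ j < k, (0 : MForm E (j + 1)) ∈ hadamardSubdiff f xbar j (fun _ => 0)) ∧
          0 < hadamardDeriv f xbar k (fun _ => 0) u) :
    ∀ᶠ y in 𝓝[≠] xbar, f xbar < f y := by
  rcases subsingleton_or_nontrivial E with hE | hE
  · have h0 : ({xbar}ᶜ : Set E) = (∅ : Set E) := by
      ext x; simp [Subsingleton.elim x xbar]
    rw [show (𝓝[≠] xbar : Filter E) = 𝓝[(∅ : Set E)] xbar by rw [← h0], nhdsWithin_empty]
    exact Filter.eventually_bot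
  -- Step 1: for every nonzero u, some derivative is positive,
  -- hence eventually f xbar < f (xbar + t • u')
  have key : ∀ u : E, u ≠ 0 →
      ∀ᶠ p : ℝ × E in (𝓝[>] (0 : ℝ)) ×ˢ 𝓝 u, f xbar < f (xbar + p.1 • p.2) := by
    intro u hu
    have hk : ∃ k : ℕ, 0 < hadamardDeriv f xbar k (fun _ => 0) u := by
      rcases h u hu with h1 | ⟨k, _, _, hk⟩
      exacts [⟨0, h1⟩, ⟨k, hk⟩]
    obtain ⟨k, hk⟩ := hk
    have h1 := eventually_lt_of_lt_liminf hk
    have h2 : ∀ᶠ p : ℝ × E in (𝓝[>] (0 : ℝ)) ×ˢ 𝓝 u, 0 < p.1 :=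
      Eventually.prod_inl (eventually_mem_nhdsWithin) _
    filter_upwards [h1, h2] with p hF hp
    simp only [ContinuousMultilinearMap.zero_apply, mul_zero, Finset.sum_const_zero,
      EReal.coe_zero, sub_zero] at hF
    have hc : (0 : ℝ) < (Nat.factorial (k + 1) : ℝ) / p.1 ^ (k + 1) := by
      have := Nat.factorial_pos (k + 1)
      positivity
    by_contra hle
    push_neg at hle
    have hfx : f xbar = ((f xbar).toReal : EReal) := (EReal.coe_toReal hdom (hbot xbar)).symm
    have hsub : f (xbar + p.1 • p.2) - f xbar ≤ 0 := by
      apply EReal.sub_le_of_le_add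
      rw [zero_add]
      exact hle
    have : (((Nat.factorial (k + 1) : ℝ) / p.1 ^ (k + 1) : ℝ) : EReal) *
        (f (xbar + p.1 • p.2) - f xbar) ≤ 0 :=
      mul_nonpos_of_nonneg_of_nonpos (by exact_mod_cast hc.le) hsub
    exact absurd (lt_of_lt_of_le hF this) (lt_irrefl _)
  -- Step 2: extract neighborhoods
  have key2 : ∀ u : E, u ∈ Metric.sphere (0 : E) 1 →
      ∃ ε : ℝ, 0 < ε ∧ ∃ V : Set E, V ∈ 𝓝 u ∧
        ∀ v ∈ V, ∀ t : ℝ, 0 < t → t ≤ ε → f xbar < f (xbar + t • v) := by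
    intro u hu
    have hu0 : u ≠ 0 := by
      intro h0
      rw [mem_sphere_zero_iff_norm, h0, norm_zero] at hu
      norm_num at hu
    obtain ⟨s, hs, V, hV, hsV⟩ := Filter.mem_prod_iff.1 (key u hu0)
    obtain ⟨ε, hε, hIoc⟩ := mem_nhdsGT_iff_exists_Ioc_subset.1 hs
    exact ⟨ε, hε, V, hV, fun v hv t ht htε =>
      hsV (Set.mk_mem_prod (hIoc ⟨ht, htε⟩) hv)⟩
  choose eps heps V hV hprop using key2
  -- Step 3: compactness of the sphere
  have hsph : IsCompact (Metric.sphere (0 : E) 1) := isCompact_sphere 0 1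
  obtain ⟨T, hT⟩ := hsph.elim_nhds_subcover' (fun u hu => V u hu) (fun u hu => hV u hu)
  have hne : T.Nonempty := by
    obtain ⟨v0, hv0⟩ := (NormedSpace.sphere_nonempty (x := (0 : E))).2 zero_le_one
    obtain ⟨i, hi, -⟩ := Set.mem_iUnion₂.1 (hT hv0)
    exact ⟨i, hi⟩
  set ε := T.inf' hne (fun x => eps x.1 x.2) with hεdef
  have hεpos : 0 < ε := by
    rw [hεdef, Finset.lt_inf'_iff]
    exact fun i _ => heps i.1 i.2
  -- Step 4: conclude
  rw [eventually_nhdsWithin_iff]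
  filter_upwards [Metric.ball_mem_nhds xbar hεpos] with y hy hyne
  have hyne' : y - xbar ≠ 0 := sub_ne_zero_of_ne (Set.mem_compl_singleton_iff.1 hyne)
  set r := ‖y - xbar‖ with hr
  have hrpos : 0 < r := norm_pos_iff.2 hyne'
  set v := r⁻¹ • (y - xbar) with hv'
  have hvs : v ∈ Metric.sphere (0 : E) 1 := by
    rw [mem_sphere_zero_iff_norm, hv', norm_smul, norm_inv, norm_norm, ← hr,
      inv_mul_cancel₀ hrpos.ne']
  obtain ⟨i, hiT, hiv⟩ := Set.mem_iUnion₂.1 (hT hvs)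
  have hrε : r ≤ eps i.1 i.2 := by
    have h1 : r < ε := by
      rw [hr, ← dist_eq_norm]
      exact Metric.mem_ball.1 hy
    exact h1.le.trans (Finset.inf'_le _ hiT)
  have := hprop i.1 i.2 v hiv r hrpos hrε
  have heq : xbar + r • v = y := by
    rw [hv', smul_smul, mul_inv_cancel₀ hrpos.ne', one_smul]
    abel
  rwa [heq] at this
end

section
/- Let f : E → ℝ ∪ {+∞} be proper, x̄ ∈ dom f, and n ≥ 2 an integer. Then x̄ is an isolated local minimizer of order n (i.e., there exist a neighborhood N of x̄ and C > 0 with f(x) ≥ f(x̄) + C‖x − x̄‖ⁿ for all x ∈ N) if and only if 0 ∈ ∂₋ⁱf(x̄; 0,…,0) for all i = 1,…,n−1 and d₋ⁿf(x̄; 0,…,0; u) > 0 for every u ∈ E \ {0}. -/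
open Filter Topology

/-- With zero parameters, the Hadamard derivative simplifies. -/
lemma hadamardDeriv_zero {E : Type*} [NormedAddCommGroup E] [InnerProductSpace ℝ E]
    (f : E → EReal) (x : E) (k : ℕ) (u : E) :
    hadamardDeriv f x k (fun _ => 0) u =
      Filter.liminf
        (fun p : ℝ × E =>
          (((Nat.factorial (k + 1) : ℝ) / p.1 ^ (k + 1) : ℝ) : EReal) *
            (f (x + p.1 • p.2) - f x))
        ((𝓝[>] (0 : ℝ)) ×ˢ 𝓝 u) := by
  unfold hadamardDeriv
  simp

/-- Lower bound for products in `EReal`. -/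
lemma key_lb (m r c : ℝ) (hm : 0 < m) (a : EReal) (h : ((r : EReal) + (c : EReal)) ≤ a) :
    ((m * c : ℝ) : EReal) ≤ (m : EReal) * (a - (r : EReal)) := by
  induction a with
  | bot =>
    rw [← EReal.coe_add] at h
    simp at h
  | coe a =>
    rw [← EReal.coe_add] at h
    rw [← EReal.coe_sub, ← EReal.coe_mul, EReal.coe_le_coe_iff]
    have : r + c ≤ a := by exact_mod_cast h
    nlinarith
  | top =>
    rw [EReal.top_sub_coe, EReal.coe_mul_top_of_pos hm]
    exact le_top

/-- Upper bound for products in `EReal`. -/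
lemma key_ub (m r c : ℝ) (hm : 0 < m) (a : EReal) (ha : a ≠ ⊥)
    (h : a < ((r : EReal) + (c : EReal))) :
    (m : EReal) * (a - (r : EReal)) ≤ ((m * c : ℝ) : EReal) := by
  induction a with
  | bot => exact absurd rfl ha
  | coe a =>
    rw [← EReal.coe_add] at h
    rw [← EReal.coe_sub, ← EReal.coe_mul, EReal.coe_le_coe_iff]
    have : a < r + c := by exact_mod_cast h
    nlinarith
  | top =>
    rw [← EReal.coe_add] at h
    exact absurd h (by simp)

/-- `xbar` is an isolated local minimizer of order `n = k + 1 ≥ 2` if and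
only if `0` lies in the lower Hadamard subdifferentials of orders `1, …, n - 1` with zero
parameters and the `n`-th order lower Hadamard derivative is positive in every nonzero
direction. -/
theorem stmt_5 {E : Type*} [NormedAddCommGroup E] [InnerProductSpace ℝ E]
    [FiniteDimensional ℝ E] (f : E → EReal)
    (hbot : ∀ y, f y ≠ ⊥) (xbar : E) (hdom : f xbar ≠ ⊤) (k : ℕ) (hk : 1 ≤ k) :
    (∃ C > (0 : ℝ), ∀ᶠ y in 𝓝 xbar,
        f xbar + ((C * ‖y - xbar‖ ^ (k + 1) : ℝ) : EReal) ≤ f y) ↔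
      (∀ j < k, (0 : MForm E (j + 1)) ∈ hadamardSubdiff f xbar j (fun _ => 0)) ∧
        ∀ u : E, u ≠ 0 → 0 < hadamardDeriv f xbar k (fun _ => 0) u := by
  obtain ⟨r, hr⟩ : ∃ r : ℝ, f xbar = (r : EReal) := by
    lift f xbar to ℝ using ⟨hdom, hbot xbar⟩ with r hr
    exact ⟨r, rfl⟩
  constructor
  · rintro ⟨C, hC, hev⟩
    rw [Metric.eventually_nhds_iff_ball] at hev
    obtain ⟨δ, hδ, hball⟩ := hev
    -- a common "eventually" statement on the product filter
    have hkey : ∀ (u : E), ∀ᶠ p : ℝ × E in (𝓝[>] (0 : ℝ)) ×ˢ 𝓝 u,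
        0 < p.1 ∧
          (f xbar + ((C * ‖p.1 • p.2‖ ^ (k + 1) : ℝ) : EReal) ≤ f (xbar + p.1 • p.2)) := by
      intro u
      have h1 : ∀ᶠ t in 𝓝[>] (0 : ℝ), t ∈ Set.Ioo (0 : ℝ) (δ / (‖u‖ + 1)) := by
        apply Ioo_mem_nhdsGT_of_mem
        exact ⟨le_refl 0, by positivity⟩
      have h2 : ∀ᶠ u' in 𝓝 u, u' ∈ Metric.ball u 1 := Metric.ball_mem_nhds u one_pos
      filter_upwards [h1.prod_mk h2] with p ⟨hp1, hp2⟩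
      obtain ⟨hp1a, hp1b⟩ := hp1
      have hn : ‖p.2‖ < ‖u‖ + 1 := norm_lt_of_mem_ball hp2
      refine ⟨hp1a, ?_⟩
      have hmem : xbar + p.1 • p.2 ∈ Metric.ball xbar δ := by
        rw [Metric.mem_ball, dist_eq_norm]
        have hnorm : ‖xbar + p.1 • p.2 - xbar‖ = p.1 * ‖p.2‖ := by
          rw [add_sub_cancel_left, norm_smul, Real.norm_eq_abs, abs_of_pos hp1a]
        rw [hnorm]
        calc p.1 * ‖p.2‖ ≤ p.1 * (‖u‖ + 1) := by
              apply mul_le_mul_of_nonneg_left hn.le hp1a.le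
          _ < (δ / (‖u‖ + 1)) * (‖u‖ + 1) := by
              apply mul_lt_mul_of_pos_right hp1b
              positivity
          _ = δ := by field_simp
      have := hball _ hmem
      rwa [add_sub_cancel_left] at this
    constructor
    · -- subdifferential conditions
      intro j _ u
      simp only [hadamardSubdiff, Set.mem_setOf_eq, ContinuousMultilinearMap.zero_apply,
        EReal.coe_zero]
      rw [hadamardDeriv_zero]
      apply Filter.le_liminf_of_le Filter.isCobounded_ge_of_top
      filter_upwards [hkey u] with p ⟨hp1, hp3⟩
      have hm : 0 < (Nat.factorial (j + 1) : ℝ) / p.1 ^ (j + 1) := by positivity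
      have h0 : ((r : EReal) + ((0 : ℝ) : EReal)) ≤ f (xbar + p.1 • p.2) := by
        rw [EReal.coe_zero, add_zero, ← hr]
        calc f xbar = f xbar + ((0:ℝ) : EReal) := by rw [EReal.coe_zero, add_zero]
          _ ≤ f xbar + ((C * ‖p.1 • p.2‖ ^ (k + 1) : ℝ) : EReal) := by
              gcongr
              positivity
          _ ≤ f (xbar + p.1 • p.2) := hp3
      have := key_lb _ r 0 hm _ h0
      rw [mul_zero, EReal.coe_zero] at this
      rw [hr]
      exact this
    · -- positivity of the top-order derivative
      intro u hu
      have hun : 0 < ‖u‖ := norm_pos_iff.mpr hu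
      rw [hadamardDeriv_zero]
      have hc0 : 0 < (Nat.factorial (k + 1) : ℝ) * C * (‖u‖ / 2) ^ (k + 1) := by positivity
      refine lt_of_lt_of_le (b := (((Nat.factorial (k + 1) : ℝ) * C * (‖u‖ / 2) ^ (k + 1) : ℝ) :
        EReal)) ?_ ?_
      · exact_mod_cast hc0
      apply Filter.le_liminf_of_le Filter.isCobounded_ge_of_top
      have hnormev : ∀ᶠ u' in 𝓝 u, ‖u‖ / 2 < ‖u'‖ :=
        (continuous_norm.continuousAt (x := u)).eventually_const_lt (by linarith)
      have hnormev' : ∀ᶠ p : ℝ × E in (𝓝[>] (0 : ℝ)) ×ˢ 𝓝 u, ‖u‖ / 2 < ‖p.2‖ := by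
        have htriv : ∀ᶠ t : ℝ in 𝓝[>] (0:ℝ), True := Filter.Eventually.of_forall fun _ => trivial
        have := htriv.prod_mk hnormev
        filter_upwards [this] with p hp
        exact hp.2
      filter_upwards [hkey u, hnormev'] with p ⟨hp1, hp3⟩ hnu'
      have hm : 0 < (Nat.factorial (k + 1) : ℝ) / p.1 ^ (k + 1) := by positivity
      have h0 : ((r : EReal) + ((C * (p.1 * ‖p.2‖) ^ (k + 1) : ℝ) : EReal)) ≤
          f (xbar + p.1 • p.2) := by
        rw [← hr]
        have : ‖p.1 • p.2‖ = p.1 * ‖p.2‖ := by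
          rw [norm_smul, Real.norm_eq_abs, abs_of_pos hp1]
        rw [← this]
        exact hp3
      have hkey2 := key_lb _ r _ hm _ h0
      rw [hr]
      refine le_trans ?_ hkey2
      rw [EReal.coe_le_coe_iff]
      have hp1ne : p.1 ^ (k+1) ≠ 0 := by positivity
      have heq : (Nat.factorial (k + 1) : ℝ) / p.1 ^ (k + 1) * (C * (p.1 * ‖p.2‖) ^ (k + 1)) =
          (Nat.factorial (k + 1) : ℝ) * C * ‖p.2‖ ^ (k + 1) := by
        field_simp
        ring
      rw [heq]
      exact mul_le_mul_of_nonneg_left (pow_le_pow_left₀ (by positivity) hnu'.le _) (by positivity)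
  · rintro ⟨_, hpos⟩
    by_contra hcon
    push_neg at hcon
    have H : ∀ m : ℕ, ∃ y, dist y xbar < 1 / (m + 1) ∧
        f y < f xbar + ((1 / (m + 1) * ‖y - xbar‖ ^ (k + 1) : ℝ) : EReal) := by
      intro m
      have hfreq := (hcon (1 / (m + 1)) (by positivity))
      obtain ⟨y, hy1, hy2⟩ := Filter.frequently_iff.mp hfreq
        (Metric.ball_mem_nhds xbar (show (0:ℝ) < 1/(m+1) by positivity))
      exact ⟨y, Metric.mem_ball.mp hy1, hy2⟩
    choose y hy1 hy2 using H
    have hyne : ∀ m, y m ≠ xbar := by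
      intro m hcontra
      have := hy2 m
      rw [hcontra, sub_self, norm_zero, zero_pow (Nat.succ_ne_zero k), mul_zero,
        EReal.coe_zero, add_zero] at this
      exact lt_irrefl _ this
    set t : ℕ → ℝ := fun m => ‖y m - xbar‖ with htdef
    have ht : ∀ m, 0 < t m := fun m => norm_pos_iff.mpr (sub_ne_zero.mpr (hyne m))
    have htlt : ∀ m, t m < 1 / (m + 1) := by
      intro m
      have := hy1 m
      rwa [dist_eq_norm] at this
    set v : ℕ → E := fun m => (t m)⁻¹ • (y m - xbar) with hvdef
    have hvmem : ∀ m, v m ∈ Metric.sphere (0 : E) 1 := by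
      intro m
      rw [mem_sphere_zero_iff_norm]
      rw [hvdef]
      simp only [norm_smul, Real.norm_eq_abs, abs_inv, abs_of_pos (ht _)]
      rw [inv_mul_eq_div]
      exact div_self (ht m).ne' 
    obtain ⟨u, humem, φ, hφ, hconv⟩ := (isCompact_sphere (0:E) 1).tendsto_subseq hvmem
    have hune : u ≠ 0 := by
      rw [mem_sphere_zero_iff_norm] at humem
      intro h
      rw [h, norm_zero] at humem
      norm_num at humem
    have hd := hpos u hune
    rw [hadamardDeriv_zero] at hd
    -- the sequence (t (φ m), v (φ m)) tends to the product filter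
    have htφ : Filter.Tendsto (fun m => t (φ m)) Filter.atTop (𝓝[>] (0 : ℝ)) := by
      rw [tendsto_nhdsWithin_iff]
      constructor
      · have hb : ∀ m : ℕ, t (φ m) ≤ 1 / ((m : ℝ) + 1) := by
          intro m
          calc t (φ m) ≤ 1 / ((φ m : ℝ) + 1) := (htlt _).le
            _ ≤ 1 / ((m : ℝ) + 1) := by
                apply one_div_le_one_div_of_le (by positivity)
                have h0 : (m : ℝ) ≤ (φ m : ℝ) := Nat.cast_le.mpr hφ.le_apply
                linarith
        exact squeeze_zero (fun m => (ht _).le) hb tendsto_one_div_add_atTop_nhds_zero_nat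
      · exact Filter.Eventually.of_forall fun m => ht _
    have hψ : Filter.Tendsto (fun m => (t (φ m), v (φ m))) Filter.atTop
        ((𝓝[>] (0 : ℝ)) ×ˢ 𝓝 u) := htφ.prodMk hconv
    -- liminf over the filter ≤ liminf along the sequence
    set g : ℝ × E → EReal := fun p =>
      (((Nat.factorial (k + 1) : ℝ) / p.1 ^ (k + 1) : ℝ) : EReal) *
        (f (xbar + p.1 • p.2) - f xbar) with hgdef
    have hle1 : Filter.liminf g ((𝓝[>] (0 : ℝ)) ×ˢ 𝓝 u) ≤
        Filter.liminf (fun m => g (t (φ m), v (φ m))) Filter.atTop := by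
      rw [show (fun m => g (t (φ m), v (φ m))) = g ∘ (fun m => (t (φ m), v (φ m))) from rfl,
        Filter.liminf_comp]
      exact Filter.liminf_le_liminf_of_le hψ
    -- pointwise bound on the sequence values
    have hbd : ∀ m, g (t (φ m), v (φ m)) ≤
        (((Nat.factorial (k + 1) : ℝ) / (φ m + 1) : ℝ) : EReal) := by
      intro m
      have hyeq : xbar + t (φ m) • v (φ m) = y (φ m) := by
        rw [hvdef]
        simp only [smul_smul]
        rw [mul_inv_cancel₀ (ht (φ m)).ne', one_smul]
        abel
      have hm : 0 < (Nat.factorial (k + 1) : ℝ) / (t (φ m)) ^ (k + 1) := by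
        have := ht (φ m); positivity
      have hlt : f (y (φ m)) < ((r : EReal) +
          ((1 / (φ m + 1) * (t (φ m)) ^ (k + 1) : ℝ) : EReal)) := by
        have := hy2 (φ m)
        rwa [hr] at this
      have := key_ub _ r _ hm _ (hbot _) hlt
      rw [hgdef]
      simp only [hyeq, hr]
      refine le_trans this ?_
      rw [EReal.coe_le_coe_iff]
      have htne : (t (φ m)) ^ (k + 1) ≠ 0 := by have := ht (φ m); positivity
      rw [div_mul_eq_mul_div, mul_comm (1 / ((φ m : ℝ) + 1)) ((t (φ m)) ^ (k + 1))]
      rw [← mul_assoc]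
      field_simp
      exact le_refl _
    -- the bound tends to 0
    have hbnd0 : Filter.Tendsto (fun m => ((Nat.factorial (k + 1) : ℝ) / (φ m + 1) : ℝ))
        Filter.atTop (𝓝 0) := by
      have h1 : Filter.Tendsto (fun m : ℕ => (1 / ((φ m : ℝ) + 1) : ℝ)) Filter.atTop (𝓝 0) := by
        have hb : ∀ m : ℕ, (1 / ((φ m : ℝ) + 1) : ℝ) ≤ 1 / ((m : ℝ) + 1) := by
          intro m
          apply one_div_le_one_div_of_le (by positivity)
          have h0 : (m : ℝ) ≤ (φ m : ℝ) := Nat.cast_le.mpr hφ.le_apply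
          linarith
        exact squeeze_zero (fun m => by positivity) hb tendsto_one_div_add_atTop_nhds_zero_nat
      have := h1.const_mul (Nat.factorial (k + 1) : ℝ)
      simpa [div_eq_mul_inv, mul_comm, one_div] using this
    have hle2 : Filter.liminf (fun m => g (t (φ m), v (φ m))) Filter.atTop ≤ (0 : EReal) := by
      calc Filter.liminf (fun m => g (t (φ m), v (φ m))) Filter.atTop ≤
          Filter.liminf (fun m => (((Nat.factorial (k + 1) : ℝ) / (φ m + 1) : ℝ) : EReal))
            Filter.atTop := Filter.liminf_le_liminf (Filter.Eventually.of_forall hbd)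
        _ = (0 : EReal) := by
            have : Filter.Tendsto
                (fun m => (((Nat.factorial (k + 1) : ℝ) / (φ m + 1) : ℝ) : EReal))
                Filter.atTop (𝓝 ((0:ℝ) : EReal)) := EReal.tendsto_coe.mpr hbnd0
            rw [Filter.Tendsto.liminf_eq this, EReal.coe_zero]
    exact absurd (lt_of_lt_of_le hd (le_trans hle1 hle2)) (lt_irrefl 0)
end

section
/- For the function f : ℝ → ℝ defined by f(x) = −exp(−1/x²) for x ≠ 0 and f(0) = 0, all lower Hadamard derivatives of every order n at x̄ = 0 with zero intermediate parameters vanish: d₋ⁿf(0; 0,…,0; u) = 0 for all u ∈ ℝ and all positive integers n, yet 0 is not a local minimizer of f (indeed f(x) < f(0) for all x ≠ 0). -/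
open Filter Topology

/-- The function `f x = -exp (-1 / x²)` for `x ≠ 0`, `f 0 = 0`, as an extended real valued
function. -/
noncomputable def fEx2 : ℝ → EReal := fun x =>
  ((if x = 0 then (0 : ℝ) else -Real.exp (-1 / x ^ 2) : ℝ) : EReal)

/-- The real-valued version of `fEx2`. -/
noncomputable def rfEx2 : ℝ → ℝ := fun x => if x = 0 then (0 : ℝ) else -Real.exp (-1 / x ^ 2)

lemma rfEx2_nonpos (x : ℝ) : rfEx2 x ≤ 0 := by
  unfold rfEx2; split
  · exact le_refl _
  · exact neg_nonpos.2 (Real.exp_pos _).le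

lemma htend (k : ℕ) (M : ℝ) (hM : 0 < M) :
    Tendsto (fun t : ℝ => ((k+1).factorial : ℝ) / t ^ (k+1) * Real.exp (-1 / (M * t) ^ 2))
      (𝓝[>] 0) (𝓝 0) := by
  have h1 : Tendsto (fun s : ℝ => s ^ (k+1) * Real.exp (-(s^2 / M^2))) atTop (𝓝 0) := by
    have base := Real.tendsto_pow_mul_exp_neg_atTop_nhds_zero (k+1)
    have comp : Tendsto (fun s : ℝ => (s^2/M^2) ^ (k+1) * Real.exp (-(s^2/M^2))) atTop (𝓝 0) :=
      base.comp ((tendsto_pow_atTop two_ne_zero).atTop_div_const (by positivity))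
    have hc : Tendsto (fun s : ℝ => (M^2)^(k+1) / s ^ (k+1)) atTop (𝓝 0) :=
      Tendsto.div_atTop tendsto_const_nhds (tendsto_pow_atTop (Nat.succ_ne_zero k))
    have hsq := hc.mul comp
    rw [zero_mul] at hsq
    refine hsq.congr' ?_
    filter_upwards [eventually_gt_atTop (0:ℝ)] with s hs
    have hs' : s ^ (k+1) ≠ 0 := by positivity
    have hM' : (M^2)^(k+1) ≠ 0 := by positivity
    field_simp
    have e1 : M ^ 2 * M⁻¹ ^ 2 = 1 := by rw [← mul_pow, mul_inv_cancel₀ hM.ne', one_pow]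
    have e2 : M ^ (k * 2) * M⁻¹ ^ (k * 2) = 1 := by rw [← mul_pow, mul_inv_cancel₀ hM.ne', one_pow]
    linear_combination (s ^ 2 * s ^ (k * 2) * (M ^ (k * 2) * M⁻¹ ^ (k * 2))) * e1 + (s ^ 2 * s ^ (k * 2)) * e2
  have h2 := (h1.comp (tendsto_inv_nhdsGT_zero (𝕜 := ℝ))).const_mul ((k+1).factorial : ℝ)
  rw [mul_zero] at h2
  refine h2.congr' ?_
  filter_upwards [self_mem_nhdsWithin] with t (ht : 0 < t)
  have ht' : t ≠ 0 := ht.ne'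
  simp only [Function.comp]
  have hexp : Real.exp (-((t⁻¹)^2 / M^2)) = Real.exp (-1/(M*t)^2) := by
    congr 1
    field_simp
  rw [hexp]
  field_simp
  rw [one_div, inv_pow, inv_mul_cancel₀ (pow_ne_zero _ ht')]

lemma gtend (k : ℕ) (u : ℝ) :
    Tendsto (fun p : ℝ × ℝ => ((k+1).factorial : ℝ) / p.1 ^ (k+1) * rfEx2 (p.1 * p.2))
      ((𝓝[>] (0:ℝ)) ×ˢ 𝓝 u) (𝓝 0) := by
  set M := |u| + 1 with hMdef
  have hM : 0 < M := by positivity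
  have hlo : Tendsto
      (fun p : ℝ × ℝ =>
        -(((k+1).factorial : ℝ) / p.1 ^ (k+1) * Real.exp (-1 / (M * p.1) ^ 2)))
      ((𝓝[>] (0:ℝ)) ×ˢ 𝓝 u) (𝓝 0) := by
    have := ((htend k M hM).comp (tendsto_fst (g := 𝓝 u))).neg
    simpa using this
  have ht : ∀ᶠ p : ℝ × ℝ in (𝓝[>] (0:ℝ)) ×ˢ 𝓝 u, 0 < p.1 :=
    Eventually.prod_inl self_mem_nhdsWithin _
  have hu' : ∀ᶠ x in 𝓝 u, |x| ≤ M := by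
    filter_upwards [eventually_abs_sub_lt u one_pos] with x hx
    calc |x| ≤ |x - u| + |u| := by simpa using abs_add_le (x - u) u
    _ ≤ M := by rw [hMdef]; linarith
  have hu : ∀ᶠ p : ℝ × ℝ in (𝓝[>] (0:ℝ)) ×ˢ 𝓝 u, |p.2| ≤ M :=
    hu'.prod_inr (𝓝[>] (0:ℝ))
  refine tendsto_of_tendsto_of_tendsto_of_le_of_le' hlo tendsto_const_nhds ?_ ?_
  · filter_upwards [ht, hu] with p hp hpu
    rcases eq_or_ne p.2 0 with h0 | h0
    · rw [h0, mul_zero]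
      show _ ≤ ((k+1).factorial : ℝ) / p.1 ^ (k+1) * rfEx2 0
      rw [show rfEx2 0 = 0 from if_pos rfl, mul_zero, neg_nonpos]
      positivity
    · have hx0 : p.1 * p.2 ≠ 0 := mul_ne_zero hp.ne' h0
      rw [show rfEx2 (p.1 * p.2) = -Real.exp (-1 / (p.1 * p.2) ^ 2) from if_neg hx0,
        mul_neg, neg_le_neg_iff]
      have hsq : (p.1 * p.2) ^ 2 ≤ (M * p.1) ^ 2 := by
        have h1 : p.2 ^ 2 ≤ M ^ 2 := sq_le_sq' (by linarith [neg_abs_le p.2]) (le_of_abs_le hpu)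
        calc (p.1 * p.2) ^ 2 = p.1 ^ 2 * p.2 ^ 2 := by ring
        _ ≤ p.1 ^ 2 * M ^ 2 := by nlinarith [sq_nonneg p.1]
        _ = (M * p.1) ^ 2 := by ring
      have hsq0 : (0:ℝ) < (p.1 * p.2) ^ 2 := by positivity
      have hexp : Real.exp (-1 / (p.1 * p.2) ^ 2) ≤ Real.exp (-1 / (M * p.1) ^ 2) := by
        apply Real.exp_le_exp.2
        rw [neg_div, neg_div, neg_le_neg_iff]
        exact one_div_le_one_div_of_le hsq0 hsq
      have hc : (0:ℝ) ≤ ((k+1).factorial : ℝ) / p.1 ^ (k+1) := by positivity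
      exact mul_le_mul_of_nonneg_left hexp hc
  · filter_upwards [ht] with p hp
    have hc : (0:ℝ) ≤ ((k+1).factorial : ℝ) / p.1 ^ (k+1) := by positivity
    exact mul_nonpos_of_nonneg_of_nonpos hc (rfEx2_nonpos _)

/-- all the lower Hadamard derivatives (of every order `n = k + 1`) of `fEx2`
at `0` with zero intermediate parameters vanish, yet `0` is not a local minimizer of
`fEx2`; indeed `fEx2 x < fEx2 0` for every `x ≠ 0`. -/
theorem stmt_6 :
    (∀ k : ℕ, ∀ u : ℝ, hadamardDeriv fEx2 0 k (fun _ => 0) u = 0) ∧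
      ¬ IsLocalMin fEx2 0 ∧ ∀ x : ℝ, x ≠ 0 → fEx2 x < fEx2 0 := by
  have hlt : ∀ x : ℝ, x ≠ 0 → fEx2 x < fEx2 0 := by
    intro x hx
    unfold fEx2
    rw [if_neg hx, if_pos rfl]
    exact_mod_cast neg_neg_iff_pos.2 (Real.exp_pos _)
  refine ⟨?_, ?_, hlt⟩
  · intro k u
    have hfun : (fun p : ℝ × ℝ =>
        (((Nat.factorial (k + 1) : ℝ) / p.1 ^ (k + 1) : ℝ) : EReal) *
          (fEx2 (0 + p.1 • p.2) - fEx2 0 -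
            ((∑ i : Fin k, p.1 ^ (i.1 + 1) / (Nat.factorial (i.1 + 1)) *
              (0 : MForm ℝ (i.1+1)) (fun _ => p.2) : ℝ) : EReal))) =
        fun p : ℝ × ℝ =>
          ((((k+1).factorial : ℝ) / p.1 ^ (k+1) * rfEx2 (p.1 * p.2) : ℝ) : EReal) := by
      funext p
      have h1 : fEx2 (0 + p.1 • p.2) = ((rfEx2 (p.1 * p.2) : ℝ) : EReal) := by
        rw [zero_add, smul_eq_mul]; rfl
      have h2 : fEx2 0 = ((0:ℝ) : EReal) := by unfold fEx2; rw [if_pos rfl]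
      have h3 : (∑ i : Fin k, p.1 ^ (i.1 + 1) / (Nat.factorial (i.1 + 1)) *
          (0 : MForm ℝ (i.1+1)) (fun _ => p.2) : ℝ) = 0 := by
        simp
      rw [h1, h2, h3, ← EReal.coe_sub, ← EReal.coe_sub, ← EReal.coe_mul]
      norm_num
    rw [hadamardDeriv, hfun]
    have := (EReal.tendsto_coe (a := (0:ℝ)).2 (gtend k u))
    rw [EReal.coe_zero] at this
    exact this.liminf_eq
  · intro h
    have h' : ∀ᶠ x in 𝓝 (0:ℝ), fEx2 0 ≤ fEx2 x := h
    obtain ⟨x, hx1, hx2⟩ :=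
      ((h'.filter_mono (nhdsWithin_le_nhds (s := {(0:ℝ)}ᶜ))).and
        eventually_mem_nhdsWithin).exists
    exact absurd hx1 (not_le.2 (hlt x hx2))
end

section
/- Every function f : E → ℝ ∪ {+∞} that is invex of order n (in terms of lower Hadamard derivatives) is also invex of order n+1. -/
open Filter Topology

/-- A tuple of forms `(x₁*, …, x_k*)` is admissible at `xbar` if each `x_i*` belongs to the
lower Hadamard subdifferential of order `i` with parameters `(x₁*, …, x_(i-1)*)`. -/
def Admissible {E : Type*} [NormedAddCommGroup E] [InnerProductSpace ℝ E]
    (f : E → EReal) (xbar : E) {k : ℕ} (xs : FormTuple E k) : Prop :=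
  ∀ i : Fin k, xs i ∈ hadamardSubdiff f xbar i.1 (xs.restrict i.1 (le_of_lt i.2))

/-- `xbar` is a stationary point of order `n`: there is an admissible tuple
`(x₁*, …, x_n*)` such that all the lower Hadamard derivatives of orders `1, …, n` with
these parameters are nonnegative in every direction. -/
def IsStationaryOfOrder {E : Type*} [NormedAddCommGroup E] [InnerProductSpace ℝ E]
    (f : E → EReal) (n : ℕ) (xbar : E) : Prop :=
  f xbar ≠ ⊤ ∧ ∃ xs : FormTuple E n, Admissible f xbar xs ∧
    ∀ j : Fin n, ∀ u : E,
      0 ≤ hadamardDeriv f xbar j.1 (xs.restrict j.1 (le_of_lt j.2)) u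

/-- `f` is invex of order `n` in terms of the lower Hadamard derivatives. -/
def IsInvexOfOrder {E : Type*} [NormedAddCommGroup E] [InnerProductSpace ℝ E]
    (f : E → EReal) (n : ℕ) : Prop :=
  ∀ xbar : E, f xbar ≠ ⊤ → ∀ x : E,
    (∃ xs : FormTuple E (n - 1), Admissible f xbar xs) →
      ∃ η : Fin n → E, ∀ xs : FormTuple E (n - 1), Admissible f xbar xs →
        (∑ j : Fin n,
            hadamardDeriv f xbar j.1 (xs.restrict j.1 (Nat.le_pred_of_lt j.2)) (η j))
          ≤ f x - f xbar

lemma admissible_restrict {E : Type*} [NormedAddCommGroup E] [InnerProductSpace ℝ E]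
    {f : E → EReal} {xbar : E} {k : ℕ} {xs : FormTuple E k} (hxs : Admissible f xbar xs)
    (m : ℕ) (h : m ≤ k) : Admissible f xbar (xs.restrict m h) := by
  intro i
  exact hxs ⟨i.1, lt_of_lt_of_le i.2 h⟩

lemma deriv_zero_le {E : Type*} [NormedAddCommGroup E] [InnerProductSpace ℝ E]
    {f : E → EReal} {xbar : E} (htop : f xbar ≠ ⊤) (hbot : f xbar ≠ ⊥)
    (k : ℕ) (xs : FormTuple E k) : hadamardDeriv f xbar k xs 0 ≤ 0 := by
  apply Filter.liminf_le_of_frequently_le'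
  have hfreq : ∃ᶠ p : ℝ × E in (𝓝[>] (0:ℝ)) ×ˢ 𝓝 (0:E), p.2 = 0 := by
    apply Filter.Frequently.filter_mono (f := (𝓝[>] (0:ℝ)) ×ˢ (pure (0:E)))
    · apply Filter.Eventually.frequently
      filter_upwards [Filter.prod_mem_prod (Filter.univ_mem) (Filter.mem_pure.mpr rfl)] with p hp
      exact hp.2.symm
    · exact Filter.prod_mono le_rfl (pure_le_nhds 0)
  apply hfreq.mono
  intro p hp
  rw [hp]
  have h1 : f (xbar + p.1 • (0:E)) = f xbar := by simp
  have h2 : (∑ i : Fin k, p.1 ^ (i.1 + 1) / (Nat.factorial (i.1 + 1)) * xs i (fun _ => (0:E)) : ℝ) = 0 := by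
    apply Finset.sum_eq_zero
    intro i _
    have : xs i (fun _ => (0:E)) = 0 := by
      have : (fun _ : Fin (i.1+1) => (0:E)) = 0 := rfl
      rw [this, ContinuousMultilinearMap.map_zero]
    rw [this, mul_zero]
  rw [h1, h2]
  have h3 : f xbar - f xbar - ((0:ℝ):EReal) = 0 := by
    lift f xbar to ℝ using ⟨htop, hbot⟩ with r
    rw [← EReal.coe_sub, ← EReal.coe_sub]
    norm_num
  rw [h3, mul_zero]

/-- every function invex of order `n` is invex of order `n + 1`. -/
theorem stmt_12 {E : Type*} [NormedAddCommGroup E] [InnerProductSpace ℝ E]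
    [FiniteDimensional ℝ E] (f : E → EReal)
    (hbot : ∀ y, f y ≠ ⊥) (hproper : ∃ y, f y ≠ ⊤) (n : ℕ) (hn : 1 ≤ n)
    (hinvex : IsInvexOfOrder f n) : IsInvexOfOrder f (n + 1) := by
  intro xbar hxbar x hex
  obtain ⟨xs0, hxs0⟩ := hex
  have hex' : ∃ xs : FormTuple E (n - 1), Admissible f xbar xs :=
    ⟨xs0.restrict (n - 1) (Nat.sub_le n 1), admissible_restrict hxs0 _ _⟩
  obtain ⟨η, hη⟩ := hinvex xbar hxbar x hex'
  refine ⟨fun j => if h : j.1 < n then η ⟨j.1, h⟩ else 0, ?_⟩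
  intro xs hxs
  rw [Fin.sum_univ_castSucc]
  have hterm : ∀ j : Fin n,
      (if h : (Fin.castSucc j).1 < n then η ⟨(Fin.castSucc j).1, h⟩ else 0) = η j :=
    fun j => dif_pos j.2
  have h1 : (∑ j : Fin n,
      hadamardDeriv f xbar (Fin.castSucc j).1
        (xs.restrict (Fin.castSucc j).1 (Nat.le_pred_of_lt (Fin.castSucc j).2))
        (if h : (Fin.castSucc j).1 < n then η ⟨(Fin.castSucc j).1, h⟩ else 0))
      ≤ f x - f xbar := by
    have := hη (xs.restrict (n - 1) (Nat.sub_le n 1)) (admissible_restrict hxs _ _)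
    simp only [hterm]
    exact this
  have h2 : hadamardDeriv f xbar (Fin.last n).1
      (xs.restrict (Fin.last n).1 (Nat.le_pred_of_lt (Fin.last n).2))
      (if h : (Fin.last n).1 < n then η ⟨(Fin.last n).1, h⟩ else 0) ≤ 0 := by
    have : (if h : (Fin.last n).1 < n then η ⟨(Fin.last n).1, h⟩ else 0) = (0:E) :=
      dif_neg (lt_irrefl n)
    rw [this]
    exact deriv_zero_le hxbar (hbot xbar) _ _
  calc _ ≤ (f x - f xbar) + 0 := add_le_add h1 h2
    _ = f x - f xbar := add_zero _
end

section
/- The function f : ℝ² → ℝ given by f(x₁,x₂) = −x₁² − x₂² is second-order invex in terms of lower Hadamard derivatives but not invex: its unique first-order stationary point (0,0) is not a global minimizer, while f has no second-order stationary points (since ∂₋¹f(0,0) = {0} and d₋²f((0,0); 0; u) = −2‖u‖² < 0 for u ≠ 0). -/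
open Filter Topology

/-- The function `f (x₁, x₂) = -x₁² - x₂²` as an extended real valued function. -/
noncomputable def fEx13 : EuclideanSpace ℝ (Fin 2) → EReal := fun x =>
  ((-(x 0) ^ 2 - (x 1) ^ 2 : ℝ) : EReal)


section Helpers13
local notation "E2" => EuclideanSpace ℝ (Fin 2)

lemma liminf_aux13 (F : ℝ × E2 → EReal) (g : ℝ × E2 → ℝ) (u : E2) (a : ℝ)
    (hcont : Continuous g) (hval : g (0, u) = a)
    (heq : ∀ p : ℝ × E2, 0 < p.1 → F p = ((g p : ℝ) : EReal)) :
    Filter.liminf F ((𝓝[>] (0:ℝ)) ×ˢ 𝓝 u) = (a : EReal) := by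
  have h1 : ∀ᶠ p in (𝓝[>] (0:ℝ)) ×ˢ 𝓝 u, F p = ((g p : ℝ) : EReal) := by
    have : ∀ᶠ p in (𝓝[>] (0:ℝ)) ×ˢ 𝓝 u, 0 < p.1 :=
      Filter.Eventually.prod_inl (eventually_mem_nhdsWithin) _
    exact this.mono fun p hp => heq p hp
  have h2 : Filter.Tendsto (fun p => ((g p : ℝ) : EReal)) ((𝓝[>] (0:ℝ)) ×ˢ 𝓝 u)
      (𝓝 (a : EReal)) := by
    rw [EReal.tendsto_coe]
    have hle : (𝓝[>] (0:ℝ)) ×ˢ 𝓝 u ≤ 𝓝 ((0:ℝ), u) := by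
      rw [nhds_prod_eq]
      exact Filter.prod_mono nhdsWithin_le_nhds le_rfl
    have := hcont.continuousAt (x := ((0:ℝ), u))
    rw [ContinuousAt, hval] at this
    exact this.mono_left hle
  rw [Filter.liminf_congr h1]
  exact h2.liminf_eq

lemma deriv1_13 (x u : E2) (xs : FormTuple E2 0) :
    hadamardDeriv fEx13 x 0 xs u = ((-2*(x 0 * u 0 + x 1 * u 1) : ℝ) : EReal) := by
  apply liminf_aux13 _ (fun p => -2*(x 0 * p.2 0 + x 1 * p.2 1) - p.1 * ((p.2 0)^2 + (p.2 1)^2))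
  · fun_prop
  · simp
  · rintro ⟨t, v⟩ ht
    simp only [fEx13, Finset.univ_eq_empty, Finset.sum_empty, EReal.coe_zero, sub_zero,
      PiLp.add_apply, PiLp.smul_apply, smul_eq_mul, Nat.factorial]
    rw [← EReal.coe_sub, ← EReal.coe_mul, EReal.coe_eq_coe_iff]
    have ht' : t ≠ 0 := ne_of_gt ht
    field_simp
    ring

lemma deriv2_13 (x u : E2) (xs : FormTuple E2 1)
    (h : ∀ v : E2, xs 0 (fun _ => v) = -2*(x 0 * v 0 + x 1 * v 1)) :
    hadamardDeriv fEx13 x 1 xs u = ((-2*((u 0)^2 + (u 1)^2) : ℝ) : EReal) := by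
  apply liminf_aux13 _ (fun p => -2*((p.2 0)^2 + (p.2 1)^2))
  · fun_prop
  · rfl
  · rintro ⟨t, v⟩ ht
    simp only [fEx13, Fin.sum_univ_one, PiLp.add_apply, PiLp.smul_apply, smul_eq_mul,
      Nat.factorial]
    rw [h v, ← EReal.coe_sub, ← EReal.coe_sub, ← EReal.coe_mul, EReal.coe_eq_coe_iff]
    have ht' : t ≠ 0 := ne_of_gt ht
    field_simp
    simp only [Fin.val_zero, pow_zero, mul_one, Nat.succ_eq_add_one, zero_add, Nat.cast_one]
    ring

lemma mform_neg13 (y : MForm E2 1) (v : E2) : y (fun _ => -v) = - y (fun _ => v) := by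
  have := y.map_smul_univ (fun _ : Fin 1 => (-1:ℝ)) (fun _ => v)
  simpa using this

lemma forced13 (x : E2) (y : MForm E2 1)
    (hy : ∀ v : E2, ((y (fun _ => v) : ℝ) : EReal) ≤ ((-2*(x 0 * v 0 + x 1 * v 1) : ℝ) : EReal)) :
    ∀ v : E2, y (fun _ => v) = -2*(x 0 * v 0 + x 1 * v 1) := by
  intro v
  have h1 := EReal.coe_le_coe_iff.1 (hy v)
  have h2 := EReal.coe_le_coe_iff.1 (hy (-v))
  rw [mform_neg13] at h2
  simp only [PiLp.neg_apply] at h2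
  linarith

lemma normsq13 (u : E2) : ‖u‖^2 = (u 0)^2 + (u 1)^2 := by
  rw [EuclideanSpace.norm_eq, Real.sq_sqrt (by positivity)]
  simp [Fin.sum_univ_two, sq_abs]

end Helpers13

/-- `fEx13` is second-order invex but not invex: its unique first-order
stationary point `0` is not a global minimizer, it has no second-order stationary points,
`∂₋¹ fEx13 0 = {0}`, and `d₋² fEx13 (0; 0; u) = -2‖u‖² < 0` for `u ≠ 0`. -/
theorem stmt_13 :
    IsInvexOfOrder fEx13 2 ∧ ¬ IsInvexOfOrder fEx13 1 ∧
      (∀ xbar : EuclideanSpace ℝ (Fin 2), IsStationaryOfOrder fEx13 1 xbar ↔ xbar = 0) ∧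
      ¬ (∀ x : EuclideanSpace ℝ (Fin 2), fEx13 0 ≤ fEx13 x) ∧
      ¬ (∃ xbar : EuclideanSpace ℝ (Fin 2), IsStationaryOfOrder fEx13 2 xbar) ∧
      hadamardSubdiff fEx13 0 0 (fun _ => 0) = {0} ∧
      (∀ u : EuclideanSpace ℝ (Fin 2),
        hadamardDeriv fEx13 0 1 (fun _ => 0) u = ((-2 * ‖u‖ ^ 2 : ℝ) : EReal)) ∧
      ∀ u : EuclideanSpace ℝ (Fin 2), u ≠ 0 →
        hadamardDeriv fEx13 0 1 (fun _ => 0) u < 0 := by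
  have hstat0 : ∀ xbar : EuclideanSpace ℝ (Fin 2),
      (∀ u : EuclideanSpace ℝ (Fin 2), (0:EReal) ≤ ((-2*(xbar 0 * u 0 + xbar 1 * u 1) : ℝ) : EReal)) →
        xbar 0 = 0 ∧ xbar 1 = 0 := by
    intro xbar h
    have h' := h xbar
    rw [← EReal.coe_zero, EReal.coe_le_coe_iff] at h'
    constructor
    · nlinarith [sq_nonneg (xbar 0), sq_nonneg (xbar 1)]
    · nlinarith [sq_nonneg (xbar 0), sq_nonneg (xbar 1)]
  have hsingle0 : (EuclideanSpace.single (0 : Fin 2) (1:ℝ)) 0 = 1 := by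
    simp [EuclideanSpace.single_apply]
  have hsingle1 : (EuclideanSpace.single (0 : Fin 2) (1:ℝ)) 1 = 0 := by
    simp [EuclideanSpace.single_apply]
  have part7 : ∀ u : EuclideanSpace ℝ (Fin 2),
      hadamardDeriv fEx13 0 1 (fun _ => 0) u = ((-2 * ‖u‖ ^ 2 : ℝ) : EReal) := by
    intro u
    rw [deriv2_13 0 u _ ?_]
    · rw [EReal.coe_eq_coe_iff, normsq13]
    · intro v
      show ((0 : MForm (EuclideanSpace ℝ (Fin 2)) 1)) (fun _ => v) = _
      rw [ContinuousMultilinearMap.zero_apply]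
      have hz : (0:EuclideanSpace ℝ (Fin 2)) 0 = 0 := rfl
      have hz1 : (0:EuclideanSpace ℝ (Fin 2)) 1 = 0 := rfl
      rw [hz, hz1]
      ring
  refine ⟨?_, ?_, ?_, ?_, ?_, ?_, part7, ?_⟩
  · -- second-order invex
    intro xbar _ x _
    refine ⟨![0, x], ?_⟩
    intro xs hxs
    have hy := hxs ⟨0, by norm_num⟩
    simp only [hadamardSubdiff, Set.mem_setOf_eq] at hy
    have hforced : ∀ v : EuclideanSpace ℝ (Fin 2),
        xs ⟨0, by norm_num⟩ (fun _ => v) = -2*(xbar 0 * v 0 + xbar 1 * v 1) := by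
      apply forced13
      intro v
      have := hy v
      rwa [deriv1_13] at this
    rw [Fin.sum_univ_two]
    have e0 : hadamardDeriv fEx13 xbar (0:Fin 2).1
        (FormTuple.restrict xs (0:Fin 2).1 (Nat.le_pred_of_lt (0:Fin 2).2)) (![0, x] 0)
        = ((-2*(xbar 0 * (0:EuclideanSpace ℝ (Fin 2)) 0
            + xbar 1 * (0:EuclideanSpace ℝ (Fin 2)) 1) : ℝ) : EReal) := by
      rw [show (![0, x] 0 : EuclideanSpace ℝ (Fin 2)) = 0 from rfl]
      exact deriv1_13 _ _ _
    have e1 : hadamardDeriv fEx13 xbar (1:Fin 2).1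
        (FormTuple.restrict xs (1:Fin 2).1 (Nat.le_pred_of_lt (1:Fin 2).2)) (![0, x] 1)
        = ((-2*((x 0)^2 + (x 1)^2) : ℝ) : EReal) := by
      rw [show (![0, x] 1 : EuclideanSpace ℝ (Fin 2)) = x from rfl]
      exact deriv2_13 _ _ _ (fun v => hforced v)
    rw [e0, e1]
    show _ ≤ ((-(x 0) ^ 2 - (x 1) ^ 2 : ℝ) : EReal) - ((-(xbar 0) ^ 2 - (xbar 1) ^ 2 : ℝ) : EReal)
    rw [← EReal.coe_add, ← EReal.coe_sub, EReal.coe_le_coe_iff]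
    have hz : (0:EuclideanSpace ℝ (Fin 2)) 0 = 0 := rfl
    have hz1 : (0:EuclideanSpace ℝ (Fin 2)) 1 = 0 := rfl
    rw [hz, hz1]
    nlinarith [sq_nonneg (x 0), sq_nonneg (x 1), sq_nonneg (xbar 0), sq_nonneg (xbar 1)]
  · -- not first-order invex
    intro h
    obtain ⟨η, hη⟩ := h 0 (EReal.coe_ne_top _) (EuclideanSpace.single 0 1)
      ⟨fun i => i.elim0, fun i => i.elim0⟩
    have hthis := hη (fun i => i.elim0) (fun i => i.elim0)
    rw [Fin.sum_univ_one] at hthis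
    have hz : (0:EuclideanSpace ℝ (Fin 2)) 0 = 0 := rfl
    have hz1 : (0:EuclideanSpace ℝ (Fin 2)) 1 = 0 := rfl
    have hterm : hadamardDeriv fEx13 0 (((0:Fin 1)) : ℕ)
        (FormTuple.restrict (fun i => i.elim0) (((0:Fin 1)) : ℕ)
          (Nat.le_pred_of_lt (0:Fin 1).2)) (η 0)
        = ((-2*((0:EuclideanSpace ℝ (Fin 2)) 0 * (η 0) 0
            + (0:EuclideanSpace ℝ (Fin 2)) 1 * (η 0) 1) : ℝ) : EReal) := deriv1_13 _ _ _
    rw [hterm, hz, hz1] at hthis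
    have hrhs : fEx13 (EuclideanSpace.single 0 1) - fEx13 0 = ((-1 : ℝ) : EReal) := by
      show ((_ : ℝ) : EReal) - ((_ : ℝ) : EReal) = _
      rw [← EReal.coe_sub, EReal.coe_eq_coe_iff, hsingle0, hsingle1, hz, hz1]
      norm_num
    rw [hrhs, EReal.coe_le_coe_iff] at hthis
    norm_num at hthis
  · -- first-order stationary points = {0}
    intro xbar
    constructor
    · rintro ⟨-, xs, -, hpos⟩
      have h : xbar 0 = 0 ∧ xbar 1 = 0 := by
        apply hstat0
        intro u
        have := hpos ⟨0, one_pos⟩ u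
        rwa [deriv1_13] at this
      ext i
      fin_cases i
      · exact h.1
      · exact h.2
    · rintro rfl
      refine ⟨EReal.coe_ne_top _, fun _ => 0, ?_, ?_⟩
      · intro i
        obtain ⟨i, hi⟩ := i
        interval_cases i
        intro u
        show (((0 : MForm (EuclideanSpace ℝ (Fin 2)) 1) (fun _ => u) : ℝ) : EReal) ≤ _
        rw [ContinuousMultilinearMap.zero_apply, deriv1_13]
        have hz : (0:EuclideanSpace ℝ (Fin 2)) 0 = 0 := rfl
        have hz1 : (0:EuclideanSpace ℝ (Fin 2)) 1 = 0 := rfl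
        rw [hz, hz1, EReal.coe_le_coe_iff]
        norm_num
      intro j u
      obtain ⟨j, hj⟩ := j
      interval_cases j
      rw [deriv1_13]
      have hz : (0:EuclideanSpace ℝ (Fin 2)) 0 = 0 := rfl
      have hz1 : (0:EuclideanSpace ℝ (Fin 2)) 1 = 0 := rfl
      rw [hz, hz1, ← EReal.coe_zero, EReal.coe_le_coe_iff]
      norm_num
  · -- 0 is not a global minimizer
    intro h
    have hthis := h (EuclideanSpace.single 0 1)
    have hz : (0:EuclideanSpace ℝ (Fin 2)) 0 = 0 := rfl
    have hz1 : (0:EuclideanSpace ℝ (Fin 2)) 1 = 0 := rfl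
    rw [show fEx13 0 = ((0:ℝ) : EReal) by
        show ((_:ℝ) : EReal) = _
        rw [EReal.coe_eq_coe_iff, hz, hz1]; norm_num,
      show fEx13 (EuclideanSpace.single 0 1) = ((-1:ℝ) : EReal) by
        show ((_:ℝ) : EReal) = _
        rw [EReal.coe_eq_coe_iff, hsingle0, hsingle1]; norm_num] at hthis
    rw [EReal.coe_le_coe_iff] at hthis
    norm_num at hthis
  · -- no second-order stationary point
    rintro ⟨xbar, -, xs, hadm, hpos⟩
    have hx0 : xbar 0 = 0 ∧ xbar 1 = 0 := by
      apply hstat0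
      intro u
      have := hpos ⟨0, by norm_num⟩ u
      rwa [deriv1_13] at this
    have hy := hadm ⟨0, by norm_num⟩
    simp only [hadamardSubdiff, Set.mem_setOf_eq] at hy
    have hforced : ∀ v : EuclideanSpace ℝ (Fin 2),
        xs ⟨0, by norm_num⟩ (fun _ => v) = -2*(xbar 0 * v 0 + xbar 1 * v 1) := by
      apply forced13
      intro v
      have := hy v
      rwa [deriv1_13] at this
    have h2 := hpos ⟨1, by norm_num⟩ (EuclideanSpace.single 0 1)
    rw [deriv2_13 xbar _ _ (fun v => hforced v)] at h2
    rw [hsingle0, hsingle1, ← EReal.coe_zero, EReal.coe_le_coe_iff] at h2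
    norm_num at h2
  · -- first-order subdifferential at 0 is {0}
    ext y
    simp only [hadamardSubdiff, Set.mem_setOf_eq, Set.mem_singleton_iff]
    constructor
    · intro hy
      have hforced : ∀ v : EuclideanSpace ℝ (Fin 2),
          y (fun _ => v) = -2*((0:EuclideanSpace ℝ (Fin 2)) 0 * v 0
            + (0:EuclideanSpace ℝ (Fin 2)) 1 * v 1) := by
        apply forced13
        intro v
        have := hy v
        rwa [deriv1_13] at this
      ext m
      have hm : m = (fun _ => m 0) := by
        funext i
        fin_cases i
        rfl
      rw [hm, hforced (m 0)]
      show _ = (0 : ContinuousMultilinearMap ℝ _ ℝ) (fun _ => m 0)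
      rw [ContinuousMultilinearMap.zero_apply]
      have hz : (0:EuclideanSpace ℝ (Fin 2)) 0 = 0 := rfl
      have hz1 : (0:EuclideanSpace ℝ (Fin 2)) 1 = 0 := rfl
      rw [hz, hz1]
      ring
    · rintro rfl
      intro u
      rw [deriv1_13]
      show (((0 : ContinuousMultilinearMap ℝ _ ℝ) (fun _ => u) : ℝ) : EReal) ≤ _
      rw [ContinuousMultilinearMap.zero_apply]
      have hz : (0:EuclideanSpace ℝ (Fin 2)) 0 = 0 := rfl
      have hz1 : (0:EuclideanSpace ℝ (Fin 2)) 1 = 0 := rfl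
      rw [hz, hz1, EReal.coe_le_coe_iff]
      norm_num
  · -- negativity
    intro u hu
    rw [part7 u, ← EReal.coe_zero, EReal.coe_lt_coe_iff]
    have h0 : 0 < ‖u‖ := norm_pos_iff.2 hu
    nlinarith
end

section
/- Let f : E → ℝ ∪ {+∞} be proper, continuous near x̄ ∈ dom f, and ℓ-stable at x̄, and suppose f satisfies the quadratic growth directional condition (ii) at x̄: whenever the lower Dini derivative D₋f(x̄;u) = 0 for a unit vector u, there exist δ > 0 and α > 0 with f(x̄ + tu) ≥ f(x̄) + αt² for all t ∈ [0,δ). Then x̄ is an isolated local minimizer of second order if and only if ∇f(x̄) = 0. -/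
open Filter Topology

/-- The lower Dini directional derivative `D₋ f (x; u) = liminf_{t↓0} (f (x+tu) - f x)/t`. -/
noncomputable def diniLower {E : Type*} [NormedAddCommGroup E] [InnerProductSpace ℝ E]
    (f : E → EReal) (x u : E) : EReal :=
  Filter.liminf (fun t : ℝ => ((t⁻¹ : ℝ) : EReal) * (f (x + t • u) - f x)) (𝓝[>] (0 : ℝ))

/-- `f` is `ℓ`-stable at `xbar`: on some neighborhood `U` of `xbar` the lower Dini
derivatives satisfy `|D₋f (y; u) - D₋f (xbar; u)| ≤ K ‖y - xbar‖ ‖u‖` for `y ∈ U ∩ dom f`. -/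
def IsEllStable {E : Type*} [NormedAddCommGroup E] [InnerProductSpace ℝ E]
    (f : E → EReal) (xbar : E) : Prop :=
  ∃ U ∈ 𝓝 xbar, ∃ K > (0 : ℝ), ∀ y ∈ U, f y ≠ ⊤ → ∀ u : E,
    diniLower f y u - diniLower f xbar u ≤ ((K * ‖y - xbar‖ * ‖u‖ : ℝ) : EReal) ∧
    diniLower f xbar u - diniLower f y u ≤ ((K * ‖y - xbar‖ * ‖u‖ : ℝ) : EReal)

section aux
open Set

lemma tendsto_add_nhdsGT (x : ℝ) :
    Tendsto (fun t : ℝ => x + t) (𝓝[>] (0:ℝ)) (𝓝[>] x) := by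
  apply tendsto_nhdsWithin_of_tendsto_nhds_of_eventually_within
  · have : Tendsto (fun t : ℝ => x + t) (𝓝 (0:ℝ)) (𝓝 (x + 0)) :=
      (continuous_const.add continuous_id).tendsto 0
    simpa using this.mono_left nhdsWithin_le_nhds
  · filter_upwards [self_mem_nhdsWithin] with t ht
    exact lt_add_of_pos_right x ht

lemma fencing {φ : ℝ → ℝ} {ε C : ℝ} (hε : 0 < ε) (hφ : ContinuousOn φ (Icc 0 ε))
    (h : ∀ s ∈ Ico (0:ℝ) ε, ∀ r, C < r →
      ∃ᶠ t in 𝓝[>] (0:ℝ), t⁻¹ * (φ (s + t) - φ s) < r) :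
    φ ε ≤ φ 0 + C * ε := by
  have key := image_le_of_liminf_slope_right_le_deriv_boundary (a := 0) (b := ε)
    (B := fun s => φ 0 + C * s) (B' := fun _ => C) hφ (by simp)
    (by fun_prop)
    (fun x _ => ((hasDerivWithinAt_id x (Ici x)).const_mul C).const_add (φ 0) |>.congr_deriv
      (by ring))
    ?_ (right_mem_Icc.2 hε.le)
  · simpa using key
  · intro s hs r hr
    have hmap := (h s hs r hr)
    have htr := tendsto_add_nhdsGT s
    have : ∃ᶠ t in 𝓝[>] (0:ℝ), slope φ s (s + t) < r := by
      refine hmap.mono fun t ht => ?_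
      rw [slope_def_field]
      simpa [div_eq_inv_mul] using ht
    exact (frequently_map (m := fun t : ℝ => s + t) .. |>.2 this).filter_mono htr

lemma ereal_le_add_of_sub_le {a b : EReal} {c : ℝ} (h : a - b ≤ (c : EReal)) :
    a ≤ b + (c : EReal) := by
  induction b with
  | bot =>
    induction a with
    | bot => simp
    | coe a =>
      exfalso
      rw [sub_eq_add_neg, EReal.neg_bot, EReal.coe_add_top] at h
      exact (not_le.2 (EReal.coe_lt_top c)) h
    | top =>
      exfalso
      rw [sub_eq_add_neg, EReal.neg_bot, EReal.top_add_top] at h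
      exact (not_le.2 (EReal.coe_lt_top c)) h
  | coe b =>
    induction a with
    | bot => simp
    | coe a =>
      rw [← EReal.coe_sub, EReal.coe_le_coe_iff] at h
      rw [← EReal.coe_add, EReal.coe_le_coe_iff]
      linarith
    | top =>
      exfalso
      rw [EReal.top_sub_coe] at h
      exact (not_le.2 (EReal.coe_lt_top c)) h
  | top => simp

lemma ereal_coe_sub_le {b c : ℝ} {d : EReal} (h : (b : EReal) ≤ d + (c : EReal)) :
    ((b - c : ℝ) : EReal) ≤ d := by
  induction d with
  | bot =>
    exfalso
    rw [EReal.bot_add] at h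
    exact (not_le.2 (EReal.bot_lt_coe b)) h
  | coe d =>
    rw [← EReal.coe_add, EReal.coe_le_coe_iff] at h
    rw [EReal.coe_le_coe_iff]
    linarith
  | top => simp

lemma ereal_eq_top_of_top_le_add {d : EReal} {c : ℝ} (h : (⊤ : EReal) ≤ d + (c : EReal)) :
    d = ⊤ := by
  induction d with
  | bot => simp [EReal.bot_add] at h
  | coe d =>
    rw [← EReal.coe_add] at h
    exact absurd h (not_le.2 (EReal.coe_lt_top _))
  | top => rfl

end aux

set_option maxHeartbeats 2000000 in
/-- if the proper function `f` is continuous near `xbar ∈ dom f`,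
`ℓ`-stable at `xbar`, and satisfies the quadratic growth directional condition (ii) at
`xbar`, then `xbar` is an isolated local minimizer of second order iff `∇f xbar = 0`. -/
theorem stmt_15 {E : Type*} [NormedAddCommGroup E] [InnerProductSpace ℝ E]
    [FiniteDimensional ℝ E] (f : E → EReal)
    (hbot : ∀ y, f y ≠ ⊥) (xbar : E) (hdom : f xbar ≠ ⊤)
    (hcont : ∀ᶠ y in 𝓝 xbar, ContinuousAt f y)
    (hstab : IsEllStable f xbar)
    (hii : ∀ u : E, ‖u‖ = 1 → diniLower f xbar u = 0 →
      ∃ δ > (0 : ℝ), ∃ α > (0 : ℝ), ∀ t : ℝ, 0 ≤ t → t < δ →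
        f xbar + ((α * t ^ 2 : ℝ) : EReal) ≤ f (xbar + t • u)) :
    (∃ C > (0 : ℝ), ∀ᶠ y in 𝓝 xbar,
        f xbar + ((C * ‖y - xbar‖ ^ 2 : ℝ) : EReal) ≤ f y) ↔
      fderiv ℝ (fun y => (f y).toReal) xbar = 0 := by
  classical
  set g : E → ℝ := fun y => (f y).toReal with hgdef
  obtain ⟨U, hU, K, hK, hstab'⟩ := hstab
  -- a good ball
  obtain ⟨r0, hr0, hballU⟩ :
      ∃ r0 > (0:ℝ), ∀ y ∈ Metric.ball xbar r0,
        y ∈ U ∧ f y ≠ ⊤ ∧ f y ≠ ⊥ ∧ ContinuousAt f y := by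
    have hc : ContinuousAt f xbar := hcont.self_of_nhds
    have hIoo : Set.Ioo (⊥ : EReal) ⊤ ∈ 𝓝 (f xbar) :=
      Ioo_mem_nhds (bot_lt_iff_ne_bot.2 (hbot xbar)) (lt_top_iff_ne_top.2 hdom)
    have hfin : ∀ᶠ y in 𝓝 xbar, f y ∈ Set.Ioo (⊥ : EReal) ⊤ := hc hIoo
    have hall : ∀ᶠ y in 𝓝 xbar, y ∈ U ∧ f y ≠ ⊤ ∧ f y ≠ ⊥ ∧ ContinuousAt f y := by
      filter_upwards [hU, hfin, hcont] with y h1 h2 h3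
      exact ⟨h1, h2.2.ne, h2.1.ne', h3⟩
    rw [Metric.eventually_nhds_iff_ball] at hall
    obtain ⟨ε, hε, hball⟩ := hall
    exact ⟨ε, hε, hball⟩
  set B : Set E := Metric.ball xbar r0 with hBdef
  have hxB : xbar ∈ B := Metric.mem_ball_self hr0
  have hfeq : ∀ y ∈ B, f y = ((g y : ℝ) : EReal) := fun y hy =>
    (EReal.coe_toReal (hballU y hy).2.1 (hballU y hy).2.2.1).symm
  have hgcont : ∀ y ∈ B, ContinuousAt g y := fun y hy =>
    (EReal.tendsto_toReal (hballU y hy).2.1 (hballU y hy).2.2.1).comp (hballU y hy).2.2.2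
  -- Dini derivative as a liminf of real difference quotients
  have hdini : ∀ y ∈ B, ∀ u : E, diniLower f y u =
      Filter.liminf (fun t : ℝ => ((t⁻¹ * (g (y + t • u) - g y) : ℝ) : EReal)) (𝓝[>] (0:ℝ)) := by
    intro y hy u
    have htend : Tendsto (fun t : ℝ => y + t • u) (𝓝[>] (0:ℝ)) (𝓝 y) := by
      have : Tendsto (fun t : ℝ => y + t • u) (𝓝 (0:ℝ)) (𝓝 (y + (0:ℝ) • u)) :=
        ((continuous_const.add (continuous_id.smul continuous_const)).tendsto 0)
      simpa using this.mono_left nhdsWithin_le_nhds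
    have hmem : ∀ᶠ t in 𝓝[>] (0:ℝ), y + t • u ∈ B :=
      htend (Metric.isOpen_ball.mem_nhds hy)
    apply Filter.liminf_congr
    filter_upwards [hmem] with t ht
    rw [hfeq _ ht, hfeq y hy, ← EReal.coe_sub, ← EReal.coe_mul]
  -- stability, rewritten
  have Sup : ∀ y ∈ B, ∀ u : E,
      diniLower f y u ≤ diniLower f xbar u + ((K * ‖y - xbar‖ * ‖u‖ : ℝ) : EReal) := by
    intro y hy u
    exact ereal_le_add_of_sub_le (hstab' y (hballU y hy).1 (hballU y hy).2.1 u).1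
  have Sdn : ∀ y ∈ B, ∀ u : E,
      diniLower f xbar u ≤ diniLower f y u + ((K * ‖y - xbar‖ * ‖u‖ : ℝ) : EReal) := by
    intro y hy u
    exact ereal_le_add_of_sub_le (hstab' y (hballU y hy).1 (hballU y hy).2.1 u).2
  -- fencing: upper estimate
  have FE : ∀ (y w : E) (ε C : ℝ), 0 < ε → (∀ s ∈ Set.Icc (0:ℝ) ε, y + s • w ∈ B) →
      (∀ s ∈ Set.Ico (0:ℝ) ε, diniLower f (y + s • w) w ≤ (C : EReal)) →
      g (y + ε • w) ≤ g y + C * ε := by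
    intro y w ε C hε hseg hD
    have hφ : ContinuousOn (fun s : ℝ => g (y + s • w)) (Set.Icc 0 ε) := by
      intro s hs
      have hc : ContinuousAt (fun s : ℝ => y + s • w) s :=
        (continuous_const.add (continuous_id.smul continuous_const)).continuousAt
      have : ContinuousAt (g ∘ fun s : ℝ => y + s • w) s :=
        ContinuousAt.comp (hgcont _ (hseg s hs)) hc
      exact this.continuousWithinAt
    have key := fencing (C := C) hε hφ ?_
    · simpa using key
    · intro s hs r hr
      have hsB : y + s • w ∈ B := hseg s (Set.mem_Icc_of_Ico hs)
      have hle : Filter.liminf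
          (fun t : ℝ => ((t⁻¹ * (g (y + s • w + t • w) - g (y + s • w)) : ℝ) : EReal))
          (𝓝[>] (0:ℝ)) < ((r : ℝ) : EReal) := by
        rw [← hdini _ hsB w]
        exact lt_of_le_of_lt (hD s hs) (by exact_mod_cast hr)
      have hfreq := Filter.frequently_lt_of_liminf_lt (by isBoundedDefault) hle
      refine hfreq.mono fun t ht => ?_
      have ht' : t⁻¹ * (g (y + s • w + t • w) - g (y + s • w)) < r := by exact_mod_cast ht
      have : y + (s + t) • w = y + s • w + t • w := by
        rw [add_smul]; abel
      rwa [this]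
  -- fencing: lower estimate
  have FEg : ∀ (y w : E) (ε C : ℝ), 0 < ε → (∀ s ∈ Set.Icc (0:ℝ) ε, y + s • w ∈ B) →
      (∀ s ∈ Set.Ico (0:ℝ) ε, (C : EReal) ≤ diniLower f (y + s • w) w) →
      g y + C * ε ≤ g (y + ε • w) := by
    intro y w ε C hε hseg hD
    have hφ : ContinuousOn (fun s : ℝ => -(g (y + s • w))) (Set.Icc 0 ε) := by
      intro s hs
      have hc : ContinuousAt (fun s : ℝ => y + s • w) s :=
        (continuous_const.add (continuous_id.smul continuous_const)).continuousAt
      have : ContinuousAt (g ∘ fun s : ℝ => y + s • w) s :=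
        ContinuousAt.comp (hgcont _ (hseg s hs)) hc
      exact this.neg.continuousWithinAt
    have key := fencing (C := -C) hε hφ ?_
    · simp only [zero_smul, add_zero] at key
      linarith [key]
    · intro s hs r hr
      have hsB : y + s • w ∈ B := hseg s (Set.mem_Icc_of_Ico hs)
      have hlt : (((-r : ℝ)) : EReal) < Filter.liminf
          (fun t : ℝ => ((t⁻¹ * (g (y + s • w + t • w) - g (y + s • w)) : ℝ) : EReal))
          (𝓝[>] (0:ℝ)) := by
        rw [← hdini _ hsB w]
        refine lt_of_lt_of_le ?_ (hD s hs)
        exact_mod_cast (by linarith : -r < C)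
      have hev := Filter.eventually_lt_of_lt_liminf hlt (by isBoundedDefault)
      refine hev.frequently.mono fun t ht => ?_
      have ht' : -r < t⁻¹ * (g (y + s • w + t • w) - g (y + s • w)) := by exact_mod_cast ht
      have heq : y + (s + t) • w = y + s • w + t • w := by
        rw [add_smul]; abel
      rw [heq]
      have : t⁻¹ * (-(g (y + s • w + t • w)) - -(g (y + s • w)))
          = -(t⁻¹ * (g (y + s • w + t • w) - g (y + s • w))) := by ring
      rw [this]
      linarith
  -- finiteness of the Dini derivative at xbar
  have hseg0 : ∀ u : E, ‖u‖ ≠ 0 → ∀ s ∈ Set.Icc (0:ℝ) (r0 / (2 * ‖u‖)), xbar + s • u ∈ B := by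
    intro u hnu s hs
    have hnu' : 0 < ‖u‖ := lt_of_le_of_ne (norm_nonneg u) (Ne.symm hnu)
    rw [hBdef, Metric.mem_ball, dist_eq_norm]
    have e1 : ‖xbar + s • u - xbar‖ = s * ‖u‖ := by
      rw [add_sub_cancel_left, norm_smul, Real.norm_eq_abs, abs_of_nonneg hs.1]
    rw [e1]
    have e2 : s * ‖u‖ ≤ (r0 / (2 * ‖u‖)) * ‖u‖ := by
      have := hs.2
      nlinarith
    have e3 : (r0 / (2 * ‖u‖)) * ‖u‖ = r0 / 2 := by
      field_simp
    nlinarith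
  have hfin0 : ∀ u : E, ∃ c : ℝ, diniLower f xbar u = (c : EReal) := by
    intro u
    rcases eq_or_ne u 0 with rfl | hu
    · refine ⟨0, ?_⟩
      rw [hdini xbar hxB 0]
      simp only [smul_zero, add_zero, sub_self, mul_zero, EReal.coe_zero]
      exact Filter.liminf_const 0
    · set ε := r0 / (2 * ‖u‖) with hεdef
      have hnu : 0 < ‖u‖ := norm_pos_iff.2 hu
      have hε : 0 < ε := by positivity
      have hseg := hseg0 u hnu.ne'
      have hbotne : diniLower f xbar u ≠ ⊥ := by
        intro hB0
        set Cx := (g (xbar + ε • u) - g xbar) / ε - 1 with hCx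
        have hkey := FE xbar u ε Cx hε hseg ?_
        · have hCe : Cx * ε = g (xbar + ε • u) - g xbar - ε := by
            rw [hCx, sub_mul, div_mul_cancel₀ _ hε.ne', one_mul]
          rw [hCe] at hkey; linarith
        · intro s hs
          have h1 := Sup _ (hseg s (Set.mem_Icc_of_Ico hs)) u
          rw [hB0, EReal.bot_add] at h1
          exact le_trans h1 bot_le
      have htopne : diniLower f xbar u ≠ ⊤ := by
        intro hT0
        set Cx := (g (xbar + ε • u) - g xbar) / ε + 1 with hCx
        have hkey := FEg xbar u ε Cx hε hseg ?_
        · have hCe : Cx * ε = g (xbar + ε • u) - g xbar + ε := by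
            rw [hCx, add_mul, div_mul_cancel₀ _ hε.ne', one_mul]
          rw [hCe] at hkey; linarith
        · intro s hs
          have h1 := Sdn _ (hseg s (Set.mem_Icc_of_Ico hs)) u
          rw [hT0] at h1
          rw [ereal_eq_top_of_top_le_add h1]
          exact le_top
      exact ⟨(diniLower f xbar u).toReal, (EReal.coe_toReal htopne hbotne).symm⟩
  choose h hh using hfin0
  -- the difference quotients converge
  have hzero : h 0 = 0 := by
    have h0 : diniLower f xbar (0:E) = ((0:ℝ) : EReal) := by
      rw [hdini xbar hxB 0]
      simp only [smul_zero, add_zero, sub_self, mul_zero, EReal.coe_zero]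
      exact Filter.liminf_const 0
    have heq := (hh 0).symm.trans h0
    exact_mod_cast heq
  have hlim : ∀ u : E, Tendsto (fun t : ℝ => t⁻¹ * (g (xbar + t • u) - g xbar))
      (𝓝[>] (0:ℝ)) (𝓝 (h u)) := by
    intro u
    rcases eq_or_ne u 0 with rfl | hu
    · rw [hzero]
      have heq : (fun t : ℝ => t⁻¹ * (g (xbar + t • (0:E)) - g xbar)) = fun _ => (0:ℝ) := by
        funext t; simp
      rw [heq]
      exact tendsto_const_nhds
    · have hnu : 0 < ‖u‖ := norm_pos_iff.2 hu
      have hbound : ∀ᶠ t in 𝓝[>] (0:ℝ),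
          h u - K * t * ‖u‖^2 ≤ t⁻¹ * (g (xbar + t • u) - g xbar) ∧
          t⁻¹ * (g (xbar + t • u) - g xbar) ≤ h u + K * t * ‖u‖^2 := by
        have hsmall : Set.Ioo (0:ℝ) (r0 / (2*‖u‖)) ∈ 𝓝[>] (0:ℝ) :=
          Ioo_mem_nhdsGT_of_mem ⟨le_refl _, by positivity⟩
        filter_upwards [hsmall] with t ht
        obtain ⟨ht0, htε⟩ := ht
        have hsegt : ∀ s ∈ Set.Icc (0:ℝ) t, xbar + s • u ∈ B := by
          intro s hs; exact hseg0 u hnu.ne' s ⟨hs.1, le_trans hs.2 htε.le⟩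
        have hup : ∀ s ∈ Set.Ico (0:ℝ) t,
            diniLower f (xbar + s • u) u ≤ ((h u + K * t * ‖u‖^2 : ℝ) : EReal) := by
          intro s hs
          have h1 := Sup _ (hsegt s (Set.mem_Icc_of_Ico hs)) u
          rw [hh u] at h1
          have e1 : ‖xbar + s • u - xbar‖ = s * ‖u‖ := by
            rw [add_sub_cancel_left, norm_smul, Real.norm_eq_abs, abs_of_nonneg hs.1]
          refine le_trans h1 ?_
          rw [← EReal.coe_add, EReal.coe_le_coe_iff, e1]
          have e2 : s * ‖u‖ ≤ t * ‖u‖ := mul_le_mul_of_nonneg_right hs.2.le (norm_nonneg u)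
          have e3 : K * (s * ‖u‖) * ‖u‖ ≤ K * (t * ‖u‖) * ‖u‖ :=
            mul_le_mul_of_nonneg_right (mul_le_mul_of_nonneg_left e2 hK.le) (norm_nonneg u)
          have e4 : K * (t * ‖u‖) * ‖u‖ = K * t * ‖u‖^2 := by ring
          linarith
        have hdn : ∀ s ∈ Set.Ico (0:ℝ) t,
            ((h u - K * t * ‖u‖^2 : ℝ) : EReal) ≤ diniLower f (xbar + s • u) u := by
          intro s hs
          have h1 := Sdn _ (hsegt s (Set.mem_Icc_of_Ico hs)) u
          rw [hh u] at h1
          have h2 := ereal_coe_sub_le h1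
          refine le_trans ?_ h2
          rw [EReal.coe_le_coe_iff]
          have e1 : ‖xbar + s • u - xbar‖ = s * ‖u‖ := by
            rw [add_sub_cancel_left, norm_smul, Real.norm_eq_abs, abs_of_nonneg hs.1]
          rw [e1]
          have e2 : s * ‖u‖ ≤ t * ‖u‖ := mul_le_mul_of_nonneg_right hs.2.le (norm_nonneg u)
          have e3 : K * (s * ‖u‖) * ‖u‖ ≤ K * (t * ‖u‖) * ‖u‖ :=
            mul_le_mul_of_nonneg_right (mul_le_mul_of_nonneg_left e2 hK.le) (norm_nonneg u)
          have e4 : K * (t * ‖u‖) * ‖u‖ = K * t * ‖u‖^2 := by ring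
          linarith
        have hFE := FE xbar u t _ ht0 hsegt hup
        have hFEg := FEg xbar u t _ ht0 hsegt hdn
        have htinv : 0 < t⁻¹ := inv_pos.2 ht0
        constructor
        · have h3 : (h u - K * t * ‖u‖^2) * t ≤ g (xbar + t • u) - g xbar := by linarith
          have h4 := mul_le_mul_of_nonneg_left h3 htinv.le
          have h5 : t⁻¹ * ((h u - K * t * ‖u‖^2) * t) = h u - K * t * ‖u‖^2 := by
            field_simp
          linarith [h4, h5.symm.le]
        · have h3 : g (xbar + t • u) - g xbar ≤ (h u + K * t * ‖u‖^2) * t := by linarith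
          have h4 := mul_le_mul_of_nonneg_left h3 htinv.le
          have h5 : t⁻¹ * ((h u + K * t * ‖u‖^2) * t) = h u + K * t * ‖u‖^2 := by
            field_simp
          linarith [h4, h5.le]
      have hlow : Tendsto (fun t : ℝ => h u - K * t * ‖u‖^2) (𝓝[>] (0:ℝ)) (𝓝 (h u)) := by
        have hc : Tendsto (fun t : ℝ => h u - K * t * ‖u‖^2) (𝓝 (0:ℝ))
            (𝓝 (h u - K * 0 * ‖u‖^2)) :=
          ((continuous_const.sub ((continuous_const.mul continuous_id).mul
            continuous_const)).tendsto 0)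
        simpa using hc.mono_left nhdsWithin_le_nhds
      have hhigh : Tendsto (fun t : ℝ => h u + K * t * ‖u‖^2) (𝓝[>] (0:ℝ)) (𝓝 (h u)) := by
        have hc : Tendsto (fun t : ℝ => h u + K * t * ‖u‖^2) (𝓝 (0:ℝ))
            (𝓝 (h u + K * 0 * ‖u‖^2)) :=
          ((continuous_const.add ((continuous_const.mul continuous_id).mul
            continuous_const)).tendsto 0)
        simpa using hc.mono_left nhdsWithin_le_nhds
      exact tendsto_of_tendsto_of_tendsto_of_le_of_le' hlow hhigh
        (hbound.mono fun t ht => ht.1) (hbound.mono fun t ht => ht.2)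
  have hadd : ∀ u v : E, h (u + v) = h u + h v := by
    intro u v
    set c1 : ℝ := ‖u‖ + ‖v‖ + 1 with hc1
    have hc1pos : (0:ℝ) < c1 := by positivity
    have hbound : ∀ᶠ t in 𝓝[>] (0:ℝ),
        (h u - K * (t * c1) * ‖u‖) + t⁻¹ * (g (xbar + t • v) - g xbar)
          ≤ t⁻¹ * (g (xbar + t • (u + v)) - g xbar) ∧
        t⁻¹ * (g (xbar + t • (u + v)) - g xbar)
          ≤ (h u + K * (t * c1) * ‖u‖) + t⁻¹ * (g (xbar + t • v) - g xbar) := by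
      have hsmall : Set.Ioo (0:ℝ) (r0 / (2 * c1)) ∈ 𝓝[>] (0:ℝ) :=
        Ioo_mem_nhdsGT_of_mem ⟨le_refl _, by positivity⟩
      filter_upwards [hsmall] with t ht
      obtain ⟨ht0, htε⟩ := ht
      have hdistb : ∀ s ∈ Set.Icc (0:ℝ) t, ‖(xbar + t • v) + s • u - xbar‖ ≤ t * c1 := by
        intro s hs
        have e0 : xbar + t • v + s • u - xbar = t • v + s • u := by abel
        rw [e0]
        calc ‖t • v + s • u‖ ≤ ‖t • v‖ + ‖s • u‖ := norm_add_le _ _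
          _ = t * ‖v‖ + s * ‖u‖ := by
              rw [norm_smul, norm_smul, Real.norm_eq_abs, Real.norm_eq_abs,
                abs_of_nonneg ht0.le, abs_of_nonneg hs.1]
          _ ≤ t * ‖v‖ + t * ‖u‖ := by
              have := mul_le_mul_of_nonneg_right hs.2 (norm_nonneg u)
              linarith
          _ ≤ t * c1 := by
              rw [hc1]
              nlinarith [ht0.le]
      have hsegt : ∀ s ∈ Set.Icc (0:ℝ) t, (xbar + t • v) + s • u ∈ B := by
        intro s hs
        rw [hBdef, Metric.mem_ball, dist_eq_norm]
        have h1 := hdistb s hs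
        have h2 : t * c1 < (r0 / (2 * c1)) * c1 := by
          exact mul_lt_mul_of_pos_right htε hc1pos
        have h3 : (r0 / (2 * c1)) * c1 = r0 / 2 := by field_simp
        rw [h3] at h2
        exact lt_of_le_of_lt h1 (lt_trans h2 (by linarith))
      have hup : ∀ s ∈ Set.Ico (0:ℝ) t,
          diniLower f ((xbar + t • v) + s • u) u
            ≤ ((h u + K * (t * c1) * ‖u‖ : ℝ) : EReal) := by
        intro s hs
        have h1 := Sup _ (hsegt s (Set.mem_Icc_of_Ico hs)) u
        rw [hh u] at h1
        refine le_trans h1 ?_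
        rw [← EReal.coe_add, EReal.coe_le_coe_iff]
        have h2 := hdistb s (Set.mem_Icc_of_Ico hs)
        have h3 : K * ‖(xbar + t • v) + s • u - xbar‖ * ‖u‖ ≤ K * (t * c1) * ‖u‖ :=
          mul_le_mul_of_nonneg_right (mul_le_mul_of_nonneg_left h2 hK.le) (norm_nonneg u)
        linarith
      have hdn : ∀ s ∈ Set.Ico (0:ℝ) t,
          ((h u - K * (t * c1) * ‖u‖ : ℝ) : EReal)
            ≤ diniLower f ((xbar + t • v) + s • u) u := by
        intro s hs
        have h1 := Sdn _ (hsegt s (Set.mem_Icc_of_Ico hs)) u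
        rw [hh u] at h1
        have h2 := ereal_coe_sub_le h1
        refine le_trans ?_ h2
        rw [EReal.coe_le_coe_iff]
        have h3 := hdistb s (Set.mem_Icc_of_Ico hs)
        have h4 : K * ‖(xbar + t • v) + s • u - xbar‖ * ‖u‖ ≤ K * (t * c1) * ‖u‖ :=
          mul_le_mul_of_nonneg_right (mul_le_mul_of_nonneg_left h3 hK.le) (norm_nonneg u)
        linarith
      have hFE := FE (xbar + t • v) u t _ ht0 hsegt hup
      have hFEg := FEg (xbar + t • v) u t _ ht0 hsegt hdn
      have hxeq : xbar + t • (u + v) = (xbar + t • v) + t • u := by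
        rw [smul_add]; abel
      have htinv : (0:ℝ) < t⁻¹ := inv_pos.2 ht0
      rw [hxeq]
      set a := g ((xbar + t • v) + t • u) with ha
      set b := g (xbar + t • v) with hb
      set c := g xbar with hc
      have hr1 : t⁻¹ * (a - c) = t⁻¹ * (a - b) + t⁻¹ * (b - c) := by ring
      constructor
      · have h3 : (h u - K * (t * c1) * ‖u‖) * t ≤ a - b := by linarith
        have h4 := mul_le_mul_of_nonneg_left h3 htinv.le
        have h5 : t⁻¹ * ((h u - K * (t * c1) * ‖u‖) * t) = h u - K * (t * c1) * ‖u‖ := by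
          field_simp
        linarith
      · have h3 : a - b ≤ (h u + K * (t * c1) * ‖u‖) * t := by linarith
        have h4 := mul_le_mul_of_nonneg_left h3 htinv.le
        have h5 : t⁻¹ * ((h u + K * (t * c1) * ‖u‖) * t) = h u + K * (t * c1) * ‖u‖ := by
          field_simp
        linarith
    have hlow : Tendsto (fun t : ℝ => (h u - K * (t * c1) * ‖u‖)
        + t⁻¹ * (g (xbar + t • v) - g xbar)) (𝓝[>] (0:ℝ)) (𝓝 (h u + h v)) := by
      have hc' : Tendsto (fun t : ℝ => h u - K * (t * c1) * ‖u‖) (𝓝[>] (0:ℝ)) (𝓝 (h u)) := by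
        have hcc : Tendsto (fun t : ℝ => h u - K * (t * c1) * ‖u‖) (𝓝 (0:ℝ))
            (𝓝 (h u - K * ((0:ℝ) * c1) * ‖u‖)) :=
          ((continuous_const.sub ((continuous_const.mul (continuous_id.mul
            continuous_const)).mul continuous_const)).tendsto 0)
        simpa using hcc.mono_left nhdsWithin_le_nhds
      exact hc'.add (hlim v)
    have hhigh : Tendsto (fun t : ℝ => (h u + K * (t * c1) * ‖u‖)
        + t⁻¹ * (g (xbar + t • v) - g xbar)) (𝓝[>] (0:ℝ)) (𝓝 (h u + h v)) := by
      have hc' : Tendsto (fun t : ℝ => h u + K * (t * c1) * ‖u‖) (𝓝[>] (0:ℝ)) (𝓝 (h u)) := by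
        have hcc : Tendsto (fun t : ℝ => h u + K * (t * c1) * ‖u‖) (𝓝 (0:ℝ))
            (𝓝 (h u + K * ((0:ℝ) * c1) * ‖u‖)) :=
          ((continuous_const.add ((continuous_const.mul (continuous_id.mul
            continuous_const)).mul continuous_const)).tendsto 0)
        simpa using hcc.mono_left nhdsWithin_le_nhds
      exact hc'.add (hlim v)
    have hsq : Tendsto (fun t : ℝ => t⁻¹ * (g (xbar + t • (u + v)) - g xbar))
        (𝓝[>] (0:ℝ)) (𝓝 (h u + h v)) :=
      tendsto_of_tendsto_of_tendsto_of_le_of_le' hlow hhigh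
        (hbound.mono fun t ht => ht.1) (hbound.mono fun t ht => ht.2)
    exact tendsto_nhds_unique (hlim (u + v)) hsq
  have hpos : ∀ (c : ℝ), 0 < c → ∀ u : E, h (c • u) = c * h u := by
    intro c hc u
    have hmapc : Tendsto (fun t : ℝ => c * t) (𝓝[>] (0:ℝ)) (𝓝[>] (0:ℝ)) := by
      apply tendsto_nhdsWithin_of_tendsto_nhds_of_eventually_within
      · have hcc : Tendsto (fun t : ℝ => c * t) (𝓝 (0:ℝ)) (𝓝 (c * 0)) :=
          (continuous_const.mul continuous_id).tendsto 0
        simpa using hcc.mono_left nhdsWithin_le_nhds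
      · filter_upwards [self_mem_nhdsWithin] with t ht
        exact mul_pos hc ht
    have h1 : Tendsto (fun t : ℝ => c * ((c*t)⁻¹ * (g (xbar + (c*t) • u) - g xbar)))
        (𝓝[>] (0:ℝ)) (𝓝 (c * h u)) :=
      ((hlim u).comp hmapc).const_mul c
    have h2 : (fun t : ℝ => c * ((c*t)⁻¹ * (g (xbar + (c*t) • u) - g xbar)))
        =ᶠ[𝓝[>] (0:ℝ)] (fun t : ℝ => t⁻¹ * (g (xbar + t • (c • u)) - g xbar)) := by
      filter_upwards [self_mem_nhdsWithin] with t ht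
      have e1 : (c*t) • u = t • (c • u) := by rw [smul_smul, mul_comm]
      rw [e1, ← mul_assoc]
      have e2 : c * (c*t)⁻¹ = t⁻¹ := by
        rw [mul_inv, ← mul_assoc, mul_inv_cancel₀ hc.ne', one_mul]
      rw [e2]
    exact tendsto_nhds_unique (hlim (c • u)) (h1.congr' h2)
  have hneg : ∀ u : E, h (-u) = - h u := by
    intro u
    have h1 := hadd u (-u)
    rw [add_neg_cancel, hzero] at h1
    linarith
  have hsmul : ∀ (c : ℝ) (u : E), h (c • u) = c * h u := by
    intro c u
    rcases lt_trichotomy c 0 with hc | hc | hc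
    · have e1 : c • u = (-c) • (-u) := by rw [smul_neg, neg_smul, neg_neg]
      rw [e1, hpos (-c) (by linarith) (-u), hneg]
      ring
    · rw [hc, zero_smul, hzero, zero_mul]
    · exact hpos c hc u
  set L : E →L[ℝ] ℝ :=
    LinearMap.toContinuousLinearMap
      { toFun := h, map_add' := hadd, map_smul' := fun c u => by simpa using hsmul c u }
    with hLdef
  have hfd : HasFDerivAt g L xbar := by
    rw [hasFDerivAt_iff_isLittleO_nhds_zero]
    rw [Asymptotics.isLittleO_iff]
    intro cc hcc
    have hball : Metric.ball (0:E) (min r0 (cc/K)) ∈ 𝓝 (0:E) :=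
      Metric.ball_mem_nhds _ (lt_min hr0 (by positivity))
    filter_upwards [hball] with w hw
    rw [Metric.mem_ball, dist_zero_right] at hw
    have hwr : ‖w‖ < r0 := lt_of_lt_of_le hw (min_le_left _ _)
    have hwc : ‖w‖ ≤ cc / K := le_of_lt (lt_of_lt_of_le hw (min_le_right _ _))
    have hsegw : ∀ s ∈ Set.Icc (0:ℝ) 1, xbar + s • w ∈ B := by
      intro s hs
      rw [hBdef, Metric.mem_ball, dist_eq_norm, add_sub_cancel_left, norm_smul,
        Real.norm_eq_abs, abs_of_nonneg hs.1]
      calc s * ‖w‖ ≤ 1 * ‖w‖ := mul_le_mul_of_nonneg_right hs.2 (norm_nonneg w)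
        _ = ‖w‖ := one_mul _
        _ < r0 := hwr
    have hdist : ∀ s ∈ Set.Icc (0:ℝ) 1, ‖xbar + s • w - xbar‖ ≤ ‖w‖ := by
      intro s hs
      rw [add_sub_cancel_left, norm_smul, Real.norm_eq_abs, abs_of_nonneg hs.1]
      calc s * ‖w‖ ≤ 1 * ‖w‖ := mul_le_mul_of_nonneg_right hs.2 (norm_nonneg w)
        _ = ‖w‖ := one_mul _
    have hup : ∀ s ∈ Set.Ico (0:ℝ) 1,
        diniLower f (xbar + s • w) w ≤ ((h w + K * ‖w‖ * ‖w‖ : ℝ) : EReal) := by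
      intro s hs
      have h1 := Sup _ (hsegw s (Set.mem_Icc_of_Ico hs)) w
      rw [hh w] at h1
      refine le_trans h1 ?_
      rw [← EReal.coe_add, EReal.coe_le_coe_iff]
      have h2 := hdist s (Set.mem_Icc_of_Ico hs)
      have h3 : K * ‖xbar + s • w - xbar‖ * ‖w‖ ≤ K * ‖w‖ * ‖w‖ :=
        mul_le_mul_of_nonneg_right (mul_le_mul_of_nonneg_left h2 hK.le) (norm_nonneg w)
      linarith
    have hdn : ∀ s ∈ Set.Ico (0:ℝ) 1,
        ((h w - K * ‖w‖ * ‖w‖ : ℝ) : EReal) ≤ diniLower f (xbar + s • w) w := by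
      intro s hs
      have h1 := Sdn _ (hsegw s (Set.mem_Icc_of_Ico hs)) w
      rw [hh w] at h1
      have h2 := ereal_coe_sub_le h1
      refine le_trans ?_ h2
      rw [EReal.coe_le_coe_iff]
      have h3 := hdist s (Set.mem_Icc_of_Ico hs)
      have h4 : K * ‖xbar + s • w - xbar‖ * ‖w‖ ≤ K * ‖w‖ * ‖w‖ :=
        mul_le_mul_of_nonneg_right (mul_le_mul_of_nonneg_left h3 hK.le) (norm_nonneg w)
      linarith
    have hFE := FE xbar w 1 _ one_pos hsegw hup
    have hFEg := FEg xbar w 1 _ one_pos hsegw hdn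
    rw [one_smul, mul_one] at hFE hFEg
    have hLw : L w = h w := rfl
    rw [hLw]
    have h6 : K * ‖w‖ * ‖w‖ ≤ cc * ‖w‖ := by
      have h5 : K * ‖w‖ ≤ K * (cc / K) := mul_le_mul_of_nonneg_left hwc hK.le
      have h5' : K * (cc / K) = cc := by field_simp
      rw [h5'] at h5
      exact mul_le_mul_of_nonneg_right h5 (norm_nonneg w)
    rw [Real.norm_eq_abs, abs_le]
    constructor <;> linarith
  constructor
  · -- isolated min of second order → derivative zero
    rintro ⟨C, hC, hev⟩
    have hmin : IsLocalMin g xbar := by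
      filter_upwards [hev, Metric.ball_mem_nhds xbar hr0] with y hy hyB
      have h1 : ((g xbar + C * ‖y - xbar‖^2 : ℝ) : EReal) ≤ ((g y : ℝ) : EReal) := by
        rw [EReal.coe_add, ← hfeq y hyB, ← hfeq xbar hxB]
        exact_mod_cast hy
      have h2 : g xbar + C * ‖y - xbar‖^2 ≤ g y := by exact_mod_cast h1
      have h3 : 0 ≤ C * ‖y - xbar‖^2 := mul_nonneg hC.le (sq_nonneg _)
      linarith
    exact hmin.fderiv_eq_zero
  · -- derivative zero → isolated min of second order
    intro hf0
    have hL0 : ∀ u : E, h u = 0 := by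
      intro u
      have : L = 0 := by rw [← hfd.fderiv]; exact hf0
      have := DFunLike.congr_fun this u
      simpa [hLdef, LinearMap.coe_toContinuousLinearMap'] using this
    have hd0 : ∀ u : E, diniLower f xbar u = 0 := by
      intro u
      rw [hh u, hL0 u]; rfl
    by_contra hcon
    push_neg at hcon
    have hexists : ∀ n : ℕ, ∃ yy : E,
        yy ∈ Metric.ball xbar (min (r0/8) (1/((n:ℝ)+1))) ∧
        f yy < f xbar + (((1/((n:ℝ)+1)) * ‖yy - xbar‖^2 : ℝ) : EReal) := by
      intro n
      have hc1 := hcon (1/((n:ℝ)+1)) (by positivity)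
      have hc2 := hc1.and_eventually
        (Metric.ball_mem_nhds (ε := min (r0/8) (1/((n:ℝ)+1))) xbar
          (lt_min (by positivity) (by positivity)))
      obtain ⟨yy, hy1, hy2⟩ := hc2.exists
      exact ⟨yy, hy2, hy1⟩
    choose yseq hyb hyf using hexists
    have hyball : ∀ n : ℕ, ‖yseq n - xbar‖ < min (r0/8) (1/((n:ℝ)+1)) := by
      intro n
      have h1 := hyb n
      rwa [Metric.mem_ball, dist_eq_norm] at h1
    have hyne : ∀ n : ℕ, yseq n ≠ xbar := by
      intro n hEq
      have h1 := hyf n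
      rw [hEq] at h1
      simp only [sub_self, norm_zero, ne_eq, OfNat.ofNat_ne_zero, not_false_eq_true, zero_pow,
        mul_zero, EReal.coe_zero, add_zero] at h1
      exact lt_irrefl _ h1
    set tseq : ℕ → ℝ := fun n => ‖yseq n - xbar‖ with htseqdef
    have htpos : ∀ n, 0 < tseq n := fun n => norm_pos_iff.2 (sub_ne_zero.2 (hyne n))
    set useq : ℕ → E := fun n => (tseq n)⁻¹ • (yseq n - xbar) with huseqdef
    have hurec : ∀ n, (tseq n) • useq n = yseq n - xbar := by
      intro n
      rw [huseqdef]
      simp only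
      rw [smul_smul, mul_inv_cancel₀ (htpos n).ne', one_smul]
    have hunorm : ∀ n, ‖useq n‖ = 1 := by
      intro n
      rw [huseqdef]
      simp only
      rw [norm_smul, Real.norm_eq_abs, abs_inv, abs_of_pos (htpos n)]
      exact inv_mul_cancel₀ (htpos n).ne'
    obtain ⟨u, humem, ψ, hψmono, hψtend⟩ :=
      (isCompact_sphere (0:E) 1).tendsto_subseq (x := useq)
        (fun n => by rw [mem_sphere_zero_iff_norm]; exact hunorm n)
    have hun : ‖u‖ = 1 := mem_sphere_zero_iff_norm.1 humem
    obtain ⟨δ, hδ, α, hα, hgrow⟩ := hii u hun (hd0 u)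
    have htendA : Tendsto (fun k => ‖useq (ψ k) - u‖) atTop (𝓝 0) := by
      have h1 : Tendsto (fun k => useq (ψ k) - u) atTop (𝓝 (u - u)) := hψtend.sub_const u
      rw [sub_self] at h1
      exact tendsto_zero_iff_norm_tendsto_zero.1 h1
    have hev1 : ∀ᶠ k in atTop, 3*K*‖useq (ψ k) - u‖ < α/2 := by
      have h1 : Tendsto (fun k => 3*K*‖useq (ψ k) - u‖) atTop (𝓝 (3*K*0)) :=
        htendA.const_mul (3*K)
      rw [mul_zero] at h1
      exact h1.eventually_lt_const (by positivity)
    have hev2 : ∀ᶠ k : ℕ in atTop, (1/((k:ℝ)+1)) < min δ (α/2) := by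
      have h1 : Tendsto (fun k : ℕ => 1/((k:ℝ)+1)) atTop (𝓝 0) :=
        tendsto_one_div_add_atTop_nhds_zero_nat
      exact h1.eventually_lt_const (lt_min hδ (by positivity))
    obtain ⟨k, hk1, hk2⟩ := (hev1.and hev2).exists
    set n := ψ k with hndef
    set t := tseq n with htdef
    set A := ‖useq n - u‖ with hAdef
    have hApos : (0:ℝ) ≤ A := by rw [hAdef]; exact norm_nonneg _
    have hA2 : A ≤ 2 := by
      rw [hAdef]
      calc ‖useq n - u‖ ≤ ‖useq n‖ + ‖u‖ := norm_sub_le _ _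
        _ = 2 := by rw [hunorm n, hun]; norm_num
    have htlt : t < min (r0/8) (1/((n:ℝ)+1)) := hyball n
    have htr8 : t < r0/8 := lt_of_lt_of_le htlt (min_le_left _ _)
    have htn1 : t < 1/((n:ℝ)+1) := lt_of_lt_of_le htlt (min_le_right _ _)
    have hkn : (k:ℝ) ≤ (n:ℝ) := by exact_mod_cast hψmono.le_apply
    have h1n : (1:ℝ)/((n:ℝ)+1) ≤ 1/((k:ℝ)+1) := by
      apply one_div_le_one_div_of_le (by positivity)
      linarith
    have htδ : t < δ :=
      lt_of_lt_of_le (lt_of_lt_of_le htn1 h1n)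
        (le_of_lt (lt_of_lt_of_le hk2 (min_le_left _ _)))
    have ht2pos : (0:ℝ) < t^2 := pow_pos (htpos n) 2
    have hxtu : xbar + t • u ∈ B := by
      rw [hBdef, Metric.mem_ball, dist_eq_norm, add_sub_cancel_left, norm_smul,
        Real.norm_eq_abs, abs_of_pos (htpos n), hun, mul_one]
      linarith [hr0]
    have hyB : yseq n ∈ B := by
      rw [hBdef, Metric.mem_ball, dist_eq_norm]
      have e0 : ‖yseq n - xbar‖ = t := rfl
      rw [e0]
      linarith
    have e1 : g xbar + α * t^2 ≤ g (xbar + t • u) := by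
      have h1 := hgrow t (htpos n).le htδ
      rw [hfeq xbar hxB, hfeq _ hxtu, ← EReal.coe_add, EReal.coe_le_coe_iff] at h1
      exact h1
    set w : E := yseq n - (xbar + t • u) with hwdef
    have hweq : w = t • (useq n - u) := by
      rw [hwdef, smul_sub, hurec n]
      abel
    have hnw : ‖w‖ = t * A := by
      rw [hweq, norm_smul, Real.norm_eq_abs, abs_of_pos (htpos n), hAdef]
    have hdistw : ∀ s ∈ Set.Icc (0:ℝ) 1, ‖(xbar + t • u) + s • w - xbar‖ ≤ 3*t := by
      intro s hs
      have e0 : (xbar + t • u) + s • w - xbar = t • u + s • w := by abel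
      rw [e0]
      have e2 : ‖t • u + s • w‖ ≤ ‖t • u‖ + ‖s • w‖ := norm_add_le _ _
      have e3 : ‖t • u‖ = t := by
        rw [norm_smul, Real.norm_eq_abs, abs_of_pos (htpos n), hun, mul_one]
      have e4 : ‖s • w‖ = s * (t * A) := by
        rw [norm_smul, Real.norm_eq_abs, abs_of_nonneg hs.1, hnw]
      have e5 : s * (t * A) ≤ 1 * (t * A) :=
        mul_le_mul_of_nonneg_right hs.2 (mul_nonneg (htpos n).le hApos)
      have e6 : t * A ≤ t * 2 := mul_le_mul_of_nonneg_left hA2 (htpos n).le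
      rw [e3, e4] at e2
      linarith [e2, e5, e6]
    have hsegw : ∀ s ∈ Set.Icc (0:ℝ) 1, (xbar + t • u) + s • w ∈ B := by
      intro s hs
      rw [hBdef, Metric.mem_ball, dist_eq_norm]
      have h1 := hdistw s hs
      have : 3*t < r0 := by linarith
      linarith
    have hdnw : ∀ s ∈ Set.Ico (0:ℝ) 1,
        ((-(K * (3*t) * ‖w‖) : ℝ) : EReal) ≤ diniLower f ((xbar + t • u) + s • w) w := by
      intro s hs
      have h1 := Sdn _ (hsegw s (Set.mem_Icc_of_Ico hs)) w
      rw [hd0 w] at h1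
      have h1' : ((0:ℝ) : EReal) ≤ diniLower f ((xbar + t • u) + s • w) w
          + ((K * ‖(xbar + t • u) + s • w - xbar‖ * ‖w‖ : ℝ) : EReal) := by
        rw [EReal.coe_zero]
        exact h1
      have h2 := ereal_coe_sub_le h1'
      refine le_trans ?_ h2
      rw [EReal.coe_le_coe_iff]
      have h3 := hdistw s (Set.mem_Icc_of_Ico hs)
      have h4 : K * ‖(xbar + t • u) + s • w - xbar‖ * ‖w‖ ≤ K * (3*t) * ‖w‖ :=
        mul_le_mul_of_nonneg_right (mul_le_mul_of_nonneg_left h3 hK.le) (norm_nonneg w)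
      linarith
    have hFEg := FEg (xbar + t • u) w 1 _ one_pos hsegw hdnw
    rw [one_smul, mul_one] at hFEg
    have hyw : (xbar + t • u) + w = yseq n := by rw [hwdef]; abel
    rw [hyw] at hFEg
    have e3 : g (yseq n) < g xbar + (1/((n:ℝ)+1)) * t^2 := by
      have h1 := hyf n
      rw [hfeq _ hyB, hfeq xbar hxB, ← EReal.coe_add, EReal.coe_lt_coe_iff] at h1
      have e0 : ‖yseq n - xbar‖ = t := rfl
      rw [e0] at h1
      exact h1
    have e6 : K * (3*t) * (t*A) = (3*K*A)*t^2 := by ring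
    rw [hnw] at hFEg
    have hm1 := mul_lt_mul_of_pos_right hk1 ht2pos
    have hm2 := mul_lt_mul_of_pos_right
      (lt_of_le_of_lt h1n (lt_of_lt_of_le hk2 (min_le_right _ _))) ht2pos
    have e7 : (α/2)*t^2 + (α/2)*t^2 = α*t^2 := by ring
    nlinarith [e1, hFEg, e3, hm1, hm2, e6, e7]
end

section
/- Let n ≥ 2, x̄ ∈ E, and let f : E → ℝ ∪ {+∞} be proper with f ∈ 𝓕_n(x̄). Then x̄ is an isolated local minimizer of order n if and only if 0 ∈ ∂₋¹f(x̄) and 0 ∈ ∂₋ⁱf(x̄; 0,…,0) for i = 2,…,n−1. -/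
open Filter Topology

/-- `f` belongs to the class `𝓕_n (xbar)`: `xbar ∈ dom f` and for every unit vector `u`
such that `0 ∈ ∂₋ⁱ f (xbar; 0, …, 0)` for `i = 1, …, n - 2` and
`d₋ⁱ f (xbar; 0, …, 0; u) = 0` for `i = 1, …, n - 1`, there are `ε, δ, α > 0` with
`f (xbar + t u') ≥ f xbar + α tⁿ` whenever `0 ≤ t < δ` and `‖u' - u‖ < ε`. -/
def MemClassF {E : Type*} [NormedAddCommGroup E] [InnerProductSpace ℝ E]
    (f : E → EReal) (n : ℕ) (xbar : E) : Prop :=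
  f xbar ≠ ⊤ ∧ ∀ u : E, ‖u‖ = 1 →
    (∀ j : ℕ, j + 3 ≤ n → (0 : MForm E (j + 1)) ∈ hadamardSubdiff f xbar j (fun _ => 0)) →
    (∀ j : ℕ, j + 2 ≤ n → hadamardDeriv f xbar j (fun _ => 0) u = 0) →
    ∃ ε > (0 : ℝ), ∃ δ > (0 : ℝ), ∃ α > (0 : ℝ), ∀ t : ℝ, ∀ u' : E,
      0 ≤ t → t < δ → ‖u' - u‖ < ε →
      f xbar + ((α * t ^ n : ℝ) : EReal) ≤ f (xbar + t • u')

section Aux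
variable {E : Type*} [NormedAddCommGroup E] [InnerProductSpace ℝ E]

lemma deriv_zero_eq (f : E → EReal) (x : E) (k : ℕ) (u : E) :
    hadamardDeriv f x k (fun _ => 0) u =
      Filter.liminf (fun p : ℝ × E =>
        (((Nat.factorial (k+1) : ℝ) / p.1 ^ (k+1) : ℝ) : EReal) *
          (f (x + p.1 • p.2) - f x)) ((𝓝[>] (0:ℝ)) ×ˢ 𝓝 u) := by
  unfold hadamardDeriv
  congr 1
  funext p
  simp

lemma tendsto_aux (x u : E) :
    Tendsto (fun p : ℝ × E => x + p.1 • p.2) ((𝓝[>] (0:ℝ)) ×ˢ 𝓝 u) (𝓝 x) := by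
  have h : Tendsto (fun p : ℝ × E => x + p.1 • p.2) (𝓝 ((0:ℝ), u)) (𝓝 (x + (0:ℝ) • u)) := by
    apply Continuous.tendsto
    fun_prop
  simp only [zero_smul, add_zero] at h
  refine h.mono_left ?_
  rw [nhds_prod_eq]
  exact Filter.prod_mono nhdsWithin_le_nhds le_rfl

lemma extract {P : ℝ × E → Prop} {u : E}
    (h : ∀ᶠ p in (𝓝[>] (0:ℝ)) ×ˢ 𝓝 u, P p) :
    ∃ δ > (0:ℝ), ∃ ε > (0:ℝ), ∀ t u', 0 < t → t < δ → ‖u' - u‖ < ε → P (t, u') := by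
  rw [Filter.eventually_prod_iff] at h
  obtain ⟨pa, hpa, pb, hpb, himp⟩ := h
  obtain ⟨δ, hδ, hIoo⟩ := mem_nhdsGT_iff_exists_Ioo_subset.1 hpa
  obtain ⟨ε, hε, hball⟩ := Metric.mem_nhds_iff.1 hpb
  exact ⟨δ, hδ, ε, hε, fun t u' ht htδ hu' =>
    himp (hIoo ⟨ht, htδ⟩) (hball (by simpa [Metric.mem_ball, dist_eq_norm] using hu'))⟩

end Aux

section Aux2
variable {E : Type*} [NormedAddCommGroup E] [InnerProductSpace ℝ E]

lemma cone_growth {f : E → EReal} {xbar : E} {n : ℕ} (hn : 2 ≤ n)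
    (hbot : ∀ y, f y ≠ ⊥) (hF : MemClassF f n xbar)
    (H : ∀ j : ℕ, j + 2 ≤ n → (0 : MForm E (j+1)) ∈ hadamardSubdiff f xbar j (fun _ => 0))
    (u : E) (hu : ‖u‖ = 1) :
    ∃ ε > (0:ℝ), ∃ δ > (0:ℝ), ∃ α > (0:ℝ), ∀ t : ℝ, ∀ u' : E,
      0 ≤ t → t < δ → ‖u' - u‖ < ε →
      f xbar + ((α * t ^ n : ℝ) : EReal) ≤ f (xbar + t • u') := by
  by_cases hcase : ∀ j : ℕ, j + 2 ≤ n → hadamardDeriv f xbar j (fun _ => 0) u = 0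
  · exact hF.2 u hu (fun j hj => H j (by omega)) hcase
  · push_neg at hcase
    obtain ⟨j, hj, hne⟩ := hcase
    have hge : 0 ≤ hadamardDeriv f xbar j (fun _ => 0) u := by
      have := H j hj u
      simpa using this
    have hpos : 0 < hadamardDeriv f xbar j (fun _ => 0) u := lt_of_le_of_ne hge (Ne.symm hne)
    obtain ⟨c, hc0, hclt⟩ := exists_between hpos
    have hctop : c ≠ ⊤ := hclt.ne_top
    have hcbot : c ≠ ⊥ := hc0.ne_bot
    set cr := c.toReal with hcr
    have hcre : (cr : EReal) = c := EReal.coe_toReal hctop hcbot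
    have hcrpos : 0 < cr := by
      rw [← EReal.coe_lt_coe_iff (x := 0) (y := cr)]
      rw [hcre]; exact_mod_cast hc0
    rw [deriv_zero_eq] at hclt
    have hev := Filter.eventually_lt_of_lt_liminf hclt
    obtain ⟨δ, hδ, ε, hε, hprop⟩ := extract hev
    set fx := (f xbar).toReal with hfx
    have hfxe : ((fx : ℝ) : EReal) = f xbar := EReal.coe_toReal hF.1 (hbot xbar)
    refine ⟨ε, hε, min δ 1, lt_min hδ one_pos, cr / (Nat.factorial (j+1)), by positivity,
      fun t u' ht htδ hu' => ?_⟩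
    rcases eq_or_lt_of_le ht with rfl | htpos
    · simp [zero_pow (show n ≠ 0 by omega)]
    · -- t > 0
      have h1 := hprop t u' htpos (lt_of_lt_of_le htδ (min_le_left _ _)) hu'
      by_cases hFtop : f (xbar + t • u') = ⊤
      · rw [hFtop]; exact le_top
      · set Fr := (f (xbar + t • u')).toReal with hFr
        have hFre : ((Fr : ℝ) : EReal) = f (xbar + t • u') := EReal.coe_toReal hFtop (hbot _)
        rw [← hcre, ← hFre, ← hfxe, ← EReal.coe_sub, ← EReal.coe_mul, EReal.coe_lt_coe_iff] at h1
        -- h1 : cr < (j+1)!/t^(j+1) * (Fr - fx)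
        have htj : (0:ℝ) < t ^ (j+1) := pow_pos htpos _
        have hfac : (0:ℝ) < (Nat.factorial (j+1) : ℝ) := by positivity
        have hM : (0:ℝ) < (Nat.factorial (j+1) : ℝ) / t ^ (j+1) := by positivity
        have h2 : cr / ((Nat.factorial (j+1) : ℝ) / t ^ (j+1)) < Fr - fx :=
          (div_lt_iff₀ hM).2 (by linarith [h1])
        have h3 : cr / (Nat.factorial (j+1)) * t ^ n ≤ cr / (Nat.factorial (j+1)) * t ^ (j+1) := by
          apply mul_le_mul_of_nonneg_left _ (by positivity)
          exact pow_le_pow_of_le_one ht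
            (le_of_lt (lt_of_lt_of_le htδ (min_le_right _ _))) (by omega)
        have h4 : cr / (Nat.factorial (j+1)) * t ^ (j+1)
            = cr / ((Nat.factorial (j+1) : ℝ) / t ^ (j+1)) := by
          field_simp
        have h5 : fx + cr / (Nat.factorial (j+1)) * t ^ n ≤ Fr := by
          rw [hfx] at *; nlinarith [h2, h3, h4]
        calc f xbar + ((cr / (Nat.factorial (j+1)) * t ^ n : ℝ) : EReal)
            = ((fx + cr / (Nat.factorial (j+1)) * t ^ n : ℝ) : EReal) := by
              rw [EReal.coe_add, hfxe]
          _ ≤ ((Fr : ℝ) : EReal) := EReal.coe_le_coe_iff.2 h5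
          _ = f (xbar + t • u') := hFre

end Aux2

section Aux3
variable {E : Type*} [NormedAddCommGroup E] [InnerProductSpace ℝ E]

lemma forward_dir {f : E → EReal} {xbar : E} {n : ℕ} (hbot : ∀ y, f y ≠ ⊥)
    (htop : f xbar ≠ ⊤) {C : ℝ} (hC : 0 < C)
    (h : ∀ᶠ y in 𝓝 xbar, f xbar + ((C * ‖y - xbar‖ ^ n : ℝ) : EReal) ≤ f y)
    (j : ℕ) : (0 : MForm E (j+1)) ∈ hadamardSubdiff f xbar j (fun _ => 0) := by
  intro u
  simp only [ContinuousMultilinearMap.zero_apply, EReal.coe_zero]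
  rw [deriv_zero_eq]
  refine Filter.le_liminf_of_le (by isBoundedDefault) ?_
  have hev := (tendsto_aux xbar u).eventually h
  have hpos : ∀ᶠ p : ℝ × E in (𝓝[>] (0:ℝ)) ×ˢ 𝓝 u, 0 < p.1 := by
    apply Filter.eventually_prod_iff.2
    exact ⟨fun t => 0 < t, self_mem_nhdsWithin, fun _ => True,
      Filter.Eventually.of_forall (fun _ => trivial), fun {x} hx {y} _ => hx⟩
  filter_upwards [hev, hpos] with p hp hpt
  apply mul_nonneg
  · exact EReal.coe_nonneg.2 (by positivity)
  · rw [EReal.le_sub_iff_add_le (Or.inl (hbot xbar)) (Or.inl htop), zero_add]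
    refine le_trans ?_ hp
    exact le_add_of_nonneg_right (EReal.coe_nonneg.2 (by positivity))

end Aux3


/-- for `n ≥ 2` and `f ∈ 𝓕_n (xbar)`, `xbar` is an isolated local minimizer
of order `n` iff `0 ∈ ∂₋¹ f xbar` and `0 ∈ ∂₋ⁱ f (xbar; 0, …, 0)` for `i = 2, …, n - 1`. -/
theorem stmt_17 {E : Type*} [NormedAddCommGroup E] [InnerProductSpace ℝ E]
    [FiniteDimensional ℝ E] (f : E → EReal)
    (hbot : ∀ y, f y ≠ ⊥) (xbar : E) (n : ℕ) (hn : 2 ≤ n)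
    (hF : MemClassF f n xbar) :
    (∃ C > (0 : ℝ), ∀ᶠ y in 𝓝 xbar,
        f xbar + ((C * ‖y - xbar‖ ^ n : ℝ) : EReal) ≤ f y) ↔
      ∀ j : ℕ, j + 2 ≤ n →
        (0 : MForm E (j + 1)) ∈ hadamardSubdiff f xbar j (fun _ => 0) := by
  constructor
  · rintro ⟨C, hC, h⟩ j _
    exact forward_dir hbot hF.1 hC h j
  · intro H
    have key : ∀ u : E, ∃ ε > (0:ℝ), ∃ δ > (0:ℝ), ∃ α > (0:ℝ), ‖u‖ = 1 →
        ∀ t : ℝ, ∀ u' : E, 0 ≤ t → t < δ → ‖u' - u‖ < ε →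
        f xbar + ((α * t ^ n : ℝ) : EReal) ≤ f (xbar + t • u') := by
      intro u
      by_cases hu : ‖u‖ = 1
      · obtain ⟨ε, hε, δ, hδ, α, hα, hprop⟩ := cone_growth hn hbot hF H u hu
        exact ⟨ε, hε, δ, hδ, α, hα, fun _ => hprop⟩
      · exact ⟨1, one_pos, 1, one_pos, 1, one_pos, fun h => absurd h hu⟩
    choose ε hε δ hδ α hα hprop using key
    by_cases hsph : (Metric.sphere (0:E) 1).Nonempty
    · have hcover : Metric.sphere (0:E) 1 ⊆
          ⋃ u : Metric.sphere (0:E) 1, Metric.ball (u : E) (ε u) := fun v hv =>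
        Set.mem_iUnion.2 ⟨⟨v, hv⟩, Metric.mem_ball_self (hε v)⟩
      obtain ⟨s, hs⟩ := (isCompact_sphere (0:E) 1).elim_finite_subcover _
        (fun u => Metric.isOpen_ball) hcover
      have hsne : s.Nonempty := by
        obtain ⟨u0, hu0⟩ := hsph
        obtain ⟨v, hv, _⟩ := Set.mem_iUnion₂.1 (hs hu0)
        exact ⟨v, hv⟩
      set δ0 := s.inf' hsne (fun v => δ (v : E)) with hδ0def
      set C := s.inf' hsne (fun v => α (v : E)) with hCdef
      have hδ0 : 0 < δ0 := (Finset.lt_inf'_iff hsne).2 fun v _ => hδ (v : E)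
      have hC : 0 < C := (Finset.lt_inf'_iff hsne).2 fun v _ => hα (v : E)
      refine ⟨C, hC, ?_⟩
      rw [Metric.eventually_nhds_iff_ball]
      refine ⟨δ0, hδ0, fun y hy => ?_⟩
      by_cases hyx : y = xbar
      · subst hyx
        simp [zero_pow (show n ≠ 0 by omega)]
      · set t := ‖y - xbar‖ with htdef
        have htne : t ≠ 0 := by simpa [htdef, sub_eq_zero] using hyx
        have ht : 0 < t := lt_of_le_of_ne (norm_nonneg _) (Ne.symm htne)
        set u' := t⁻¹ • (y - xbar) with hu'def
        have hu'1 : ‖u'‖ = 1 := by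
          rw [hu'def, norm_smul, norm_inv, norm_norm, ← htdef, inv_mul_cancel₀ htne]
        have hmem : u' ∈ Metric.sphere (0:E) 1 := by
          simp [hu'1]
        obtain ⟨v, hv, hball⟩ := Set.mem_iUnion₂.1 (hs hmem)
        have hvu : ‖u' - (v : E)‖ < ε (v : E) := by
          simp only [Metric.mem_ball, dist_eq_norm] at hball; exact hball
        have htδ : t < δ (v : E) := by
          have h1 : t < δ0 := by simpa [dist_eq_norm, htdef] using hy
          exact lt_of_lt_of_le h1 (Finset.inf'_le _ hv)
        have hv1 : ‖(v : E)‖ = 1 := by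
          have := v.2; simp only [mem_sphere_iff_norm, sub_zero] at this; exact this
        have hle := hprop (v : E) hv1 t u' ht.le htδ hvu
        have hsmul : xbar + t • u' = y := by
          rw [hu'def, smul_inv_smul₀ htne]
          abel
        rw [hsmul] at hle
        refine le_trans ?_ hle
        apply add_le_add_right
        exact EReal.coe_le_coe_iff.2
          (mul_le_mul_of_nonneg_right (Finset.inf'_le _ hv) (by positivity))
    · refine ⟨1, one_pos, Filter.Eventually.of_forall fun y => ?_⟩
      have hy : y = xbar := by
        by_contra hne
        have hnorm : ‖y - xbar‖ ≠ 0 := by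
          simpa [sub_eq_zero] using hne
        exact hsph ⟨‖y - xbar‖⁻¹ • (y - xbar), by
          simp [norm_smul, abs_inv, inv_mul_cancel₀ hnorm]⟩
      subst hy
      simp [zero_pow (show n ≠ 0 by omega)]
end

section
/- Let f : E → ℝ be a function and x̄ ∈ E such that the directional derivative f′(x̄;u) = lim_{t↓0} t⁻¹[f(x̄+tu)−f(x̄)] and the Ben-Tal–Zowe second-order derivative f″_{BZ}(x̄;u,z) = lim_{t↓0} t⁻²[f(x̄+tu+t²z)−f(x̄)−t f′(x̄;u)] exist for all u, z ∈ E. If 0 ∈ ∂₋¹f(x̄) and 0 ∈ ∂₋²f(x̄;0) (the first- and second-order lower Hadamard necessary conditions hold at x̄), then f′(x̄;u) ≥ 0 for all u ∈ E, and whenever f′(x̄;u) = 0 one has f″_{BZ}(x̄;u,z) ≥ 0 for all z ∈ E. -/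
open Filter Topology

/-- if the directional derivative `f'` and the Ben-Tal–Zowe second-order
derivative `f''` of `f` at `xbar` exist in all directions, and the first- and second-order
lower Hadamard necessary conditions `0 ∈ ∂₋¹ f xbar`, `0 ∈ ∂₋² f (xbar; 0)` hold, then
`f' (xbar; u) ≥ 0` for all `u`, and `f''_BZ (xbar; u, z) ≥ 0` for all `z` whenever
`f' (xbar; u) = 0`. -/
theorem stmt_19 {E : Type*} [NormedAddCommGroup E] [InnerProductSpace ℝ E]
    [FiniteDimensional ℝ E] (f : E → ℝ) (xbar : E)
    (f' : E → ℝ) (f'' : E → E → ℝ)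
    (hf' : ∀ u : E, Tendsto (fun t : ℝ => t⁻¹ * (f (xbar + t • u) - f xbar))
      (𝓝[>] (0 : ℝ)) (𝓝 (f' u)))
    (hf'' : ∀ u z : E, Tendsto
      (fun t : ℝ => (t ^ 2)⁻¹ * (f (xbar + t • u + (t ^ 2) • z) - f xbar - t * f' u))
      (𝓝[>] (0 : ℝ)) (𝓝 (f'' u z)))
    (h1 : (0 : MForm E 1) ∈
      hadamardSubdiff (fun y => ((f y : ℝ) : EReal)) xbar 0 (fun _ => 0))
    (h2 : (0 : MForm E 2) ∈
      hadamardSubdiff (fun y => ((f y : ℝ) : EReal)) xbar 1 (fun _ => 0)) :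
    (∀ u : E, 0 ≤ f' u) ∧ ∀ u : E, f' u = 0 → ∀ z : E, 0 ≤ f'' u z := by
  have hne : (𝓝[>] (0:ℝ)).NeBot := nhdsGT_neBot 0
  constructor
  · intro u
    have hle := h1 u
    have h0 : (((0 : MForm E 1) (fun _ => u) : ℝ) : EReal) = (0 : EReal) := by simp
    rw [h0] at hle
    unfold hadamardDeriv at hle
    set g : ℝ × E → EReal := fun p : ℝ × E =>
        (((Nat.factorial (0 + 1) : ℝ) / p.1 ^ (0 + 1) : ℝ) : EReal) *
          (((f (xbar + p.1 • p.2) : ℝ) : EReal) - ((f xbar : ℝ) : EReal) -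
            ((∑ i : Fin 0, p.1 ^ (i.1 + 1) / (Nat.factorial (i.1 + 1)) *
              (fun _ : Fin 0 => (0 : MForm E _)) i (fun _ => p.2) : ℝ) : EReal)) with hg
    have hφ : Tendsto (fun t : ℝ => ((t, u) : ℝ × E)) (𝓝[>] (0:ℝ)) ((𝓝[>] (0:ℝ)) ×ˢ 𝓝 u) :=
      tendsto_id.prodMk tendsto_const_nhds
    have step : Filter.liminf g ((𝓝[>] (0:ℝ)) ×ˢ 𝓝 u) ≤
        Filter.liminf (g ∘ fun t : ℝ => ((t, u) : ℝ × E)) (𝓝[>] (0:ℝ)) := by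
      rw [liminf_comp]; exact liminf_le_liminf_of_le hφ
    have hcomp : (g ∘ fun t : ℝ => ((t, u) : ℝ × E)) =
        fun t : ℝ => ((t⁻¹ * (f (xbar + t • u) - f xbar) : ℝ) : EReal) := by
      funext t
      simp [hg, Function.comp, ← EReal.coe_sub, ← EReal.coe_mul, one_div]
    rw [hcomp] at step
    have htend : Tendsto (fun t : ℝ => ((t⁻¹ * (f (xbar + t • u) - f xbar) : ℝ) : EReal))
        (𝓝[>] (0:ℝ)) (𝓝 ((f' u : ℝ) : EReal)) :=
      (continuous_coe_real_ereal.tendsto _).comp (hf' u)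
    rw [htend.liminf_eq] at step
    exact_mod_cast le_trans hle step
  · intro u hu z
    have hle := h2 u
    have h0 : (((0 : MForm E 2) (fun _ => u) : ℝ) : EReal) = (0 : EReal) := by simp
    rw [h0] at hle
    unfold hadamardDeriv at hle
    set g : ℝ × E → EReal := fun p : ℝ × E =>
        (((Nat.factorial (1 + 1) : ℝ) / p.1 ^ (1 + 1) : ℝ) : EReal) *
          (((f (xbar + p.1 • p.2) : ℝ) : EReal) - ((f xbar : ℝ) : EReal) -
            ((∑ i : Fin 1, p.1 ^ (i.1 + 1) / (Nat.factorial (i.1 + 1)) *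
              (fun _ : Fin 1 => (0 : MForm E _)) i (fun _ => p.2) : ℝ) : EReal)) with hg
    have hφ : Tendsto (fun t : ℝ => ((t, u + t • z) : ℝ × E)) (𝓝[>] (0:ℝ))
        ((𝓝[>] (0:ℝ)) ×ˢ 𝓝 u) := by
      refine tendsto_id.prodMk ?_
      have hc : Tendsto (fun t : ℝ => u + t • z) (𝓝 (0:ℝ)) (𝓝 (u + (0:ℝ) • z)) :=
        (continuous_const.add (continuous_id.smul continuous_const)).tendsto 0
      simpa using hc.mono_left nhdsWithin_le_nhds
    have step : Filter.liminf g ((𝓝[>] (0:ℝ)) ×ˢ 𝓝 u) ≤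
        Filter.liminf (g ∘ fun t : ℝ => ((t, u + t • z) : ℝ × E)) (𝓝[>] (0:ℝ)) := by
      rw [liminf_comp]; exact liminf_le_liminf_of_le hφ
    have hcomp : (g ∘ fun t : ℝ => ((t, u + t • z) : ℝ × E)) =
        fun t : ℝ => ((2 * ((t ^ 2)⁻¹ * (f (xbar + t • u + (t ^ 2) • z) - f xbar - t * f' u)) : ℝ)
          : EReal) := by
      funext t
      have hx : xbar + t • (u + t • z) = xbar + t • u + (t ^ 2) • z := by
        rw [smul_add, smul_smul, ← add_assoc, pow_two]
      simp only [hg, Function.comp, hx, hu, mul_zero, sub_zero,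
        ← EReal.coe_sub, ← EReal.coe_mul]
      rw [EReal.coe_eq_coe_iff]
      norm_num [Nat.factorial, Fin.sum_univ_one]
      ring
    rw [hcomp] at step
    have htend : Tendsto (fun t : ℝ =>
        ((2 * ((t ^ 2)⁻¹ * (f (xbar + t • u + (t ^ 2) • z) - f xbar - t * f' u)) : ℝ) : EReal))
        (𝓝[>] (0:ℝ)) (𝓝 ((2 * f'' u z : ℝ) : EReal)) :=
      (continuous_coe_real_ereal.tendsto _).comp ((hf'' u z).const_mul 2)
    rw [htend.liminf_eq] at step
    have h2' : (0:ℝ) ≤ 2 * f'' u z := by exact_mod_cast le_trans hle step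
    linarith
end
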